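/- arXiv:1110.2634 — 12 statements merged into one kernel-verified Lean document; each statement's English description precedes it below -/
import Mathlib

section
/- If u and v are quaternions with |u| < 1 and |v| < 1, then |(u - v)(1 - u * conj(v))⁻¹| < 1. -/
open scoped Quaternion

theorem schur_uv_right (u v : ℍ[ℝ]) (hu : ‖u‖ < 1) (hv : ‖v‖ < 1) :
    ‖(u - v) * (1 - u * star v)⁻¹‖ < 1 := by
  have hne : (1 : ℍ[ℝ]) - u * star v ≠ 0 := by
    intro h
    have h1 : (1 : ℍ[ℝ]) = u * star v := by
      have := sub_eq_zero.mp h; exact this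
    have : (1 : ℝ) = ‖u * star v‖ := by rw [← h1]; simp
    rw [norm_mul, norm_star] at this
    nlinarith [norm_nonneg u, norm_nonneg v]
  have hpos : 0 < ‖(1 : ℍ[ℝ]) - u * star v‖ := norm_pos_iff.mpr hne
  rw [norm_mul, norm_inv]
  rw [mul_inv_lt_iff₀ hpos, one_mul]
  have hu2 : Quaternion.normSq u < 1 := by
    rw [Quaternion.normSq_eq_norm_mul_self]; nlinarith [norm_nonneg u]
  have hv2 : Quaternion.normSq v < 1 := by
    rw [Quaternion.normSq_eq_norm_mul_self]; nlinarith [norm_nonneg v]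
  have hsq : Quaternion.normSq (u - v) < Quaternion.normSq ((1 : ℍ[ℝ]) - u * star v) := by
    have key : Quaternion.normSq ((1 : ℍ[ℝ]) - u * star v) - Quaternion.normSq (u - v)
        = (1 - Quaternion.normSq u) * (1 - Quaternion.normSq v) := by
      simp only [Quaternion.normSq_def', Quaternion.re_sub, Quaternion.imI_sub,
        Quaternion.imJ_sub, Quaternion.imK_sub, Quaternion.re_mul, Quaternion.imI_mul,
        Quaternion.imJ_mul, Quaternion.imK_mul, Quaternion.re_star, Quaternion.imI_star,
        Quaternion.imJ_star, Quaternion.imK_star, Quaternion.re_one, Quaternion.imI_one,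
        Quaternion.imJ_one, Quaternion.imK_one]
      ring
    nlinarith [key]
  rw [Quaternion.normSq_eq_norm_mul_self, Quaternion.normSq_eq_norm_mul_self] at hsq
  nlinarith [norm_nonneg (u - v), hpos]
end

section
/- If u and v are quaternions with |u| < 1 and |v| < 1, then |(1 - u * conj(v))⁻¹ * (u - v)| < 1. -/
open scoped Quaternion

theorem schur_uv_left (u v : ℍ[ℝ]) (hu : ‖u‖ < 1) (hv : ‖v‖ < 1) :
    ‖(1 - u * star v)⁻¹ * (u - v)‖ < 1 := by
  have hsq : ∀ q : ℍ[ℝ], ‖q‖ ^ 2 = Quaternion.normSq q := fun q => by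
    rw [Quaternion.normSq_eq_norm_mul_self, sq]
  have key : Quaternion.normSq (1 - u * star v) =
      Quaternion.normSq (u - v) +
        (1 - Quaternion.normSq u) * (1 - Quaternion.normSq v) := by
    simp only [Quaternion.normSq_def', Quaternion.re_sub, Quaternion.imI_sub,
      Quaternion.imJ_sub, Quaternion.imK_sub, Quaternion.re_mul, Quaternion.imI_mul,
      Quaternion.imJ_mul, Quaternion.imK_mul, Quaternion.re_star, Quaternion.imI_star,
      Quaternion.imJ_star, Quaternion.imK_star, Quaternion.re_one, Quaternion.imI_one,
      Quaternion.imJ_one, Quaternion.imK_one]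
    ring
  have hu2 : ‖u‖ ^ 2 < 1 := by nlinarith [norm_nonneg u]
  have hv2 : ‖v‖ ^ 2 < 1 := by nlinarith [norm_nonneg v]
  rw [hsq] at hu2 hv2
  have hlt : ‖u - v‖ ^ 2 < ‖1 - u * star v‖ ^ 2 := by
    rw [hsq, hsq, key]
    nlinarith
  have hlt' : ‖u - v‖ < ‖1 - u * star v‖ :=
    lt_of_pow_lt_pow_left₀ 2 (norm_nonneg _) hlt
  have hpos : 0 < ‖1 - u * star v‖ := lt_of_le_of_lt (norm_nonneg _) hlt'
  rw [norm_mul, norm_inv]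
  have := (div_lt_one hpos).mpr hlt'
  rwa [div_eq_inv_mul] at this
end

section
/- For quaternions p, q with |p| < 1 and |q| < 1, the quaternion 1 - 2·Re(q)·p + |q|²·p² is invertible (nonzero), where Re(q) is the real part of q. -/
open scoped Quaternion

theorem szego_denominator_ne_zero (p q : ℍ[ℝ]) (hp : ‖p‖ < 1) (hq : ‖q‖ < 1) :
    (1 : ℍ[ℝ]) - (2 * q.re) • p + (‖q‖ ^ 2) • p ^ 2 ≠ 0 := by
  intro h
  have hsq : ‖q‖ * ‖q‖ = q.re ^ 2 + q.imI ^ 2 + q.imJ ^ 2 + q.imK ^ 2 := by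
    rw [← Quaternion.normSq_eq_norm_mul_self, Quaternion.normSq_def']
  have hpn : ‖p‖ * ‖p‖ = p.re ^ 2 + p.imI ^ 2 + p.imJ ^ 2 + p.imK ^ 2 := by
    rw [← Quaternion.normSq_eq_norm_mul_self, Quaternion.normSq_def']
  have hp0 : (0:ℝ) ≤ ‖p‖ := norm_nonneg p
  have hq0 : (0:ℝ) ≤ ‖q‖ := norm_nonneg q
  have hqp1 : ‖q‖ * ‖p‖ < 1 := by nlinarith
  have hx : (‖q‖ * ‖p‖) * (‖q‖ * ‖p‖) < 1 := by nlinarith [mul_nonneg hq0 hp0]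
  have h1 := congrArg QuaternionAlgebra.re h
  have h2 := congrArg QuaternionAlgebra.imI h
  have h3 := congrArg QuaternionAlgebra.imJ h
  have h4 := congrArg QuaternionAlgebra.imK h
  simp only [pow_two, Quaternion.re_mul, Quaternion.imI_mul, Quaternion.imJ_mul,
    Quaternion.imK_mul, Quaternion.re_add, Quaternion.imI_add, Quaternion.imJ_add,
    Quaternion.imK_add, Quaternion.re_sub, Quaternion.imI_sub, Quaternion.imJ_sub,
    Quaternion.imK_sub, Quaternion.re_smul, Quaternion.imI_smul, Quaternion.imJ_smul,
    Quaternion.imK_smul, Quaternion.re_one, Quaternion.imI_one, Quaternion.imJ_one,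
    Quaternion.imK_one, Quaternion.re_zero, Quaternion.imI_zero, Quaternion.imJ_zero,
    Quaternion.imK_zero, smul_eq_mul] at h1 h2 h3 h4
  have hSq2 : q.re ^ 2 ≤ ‖q‖ * ‖q‖ := by
    nlinarith [sq_nonneg q.imI, sq_nonneg q.imJ, sq_nonneg q.imK]
  by_cases hc : ‖q‖ * ‖q‖ * p.re = q.re
  · rw [← hc] at h1
    have h5 : ‖q‖ * ‖q‖ * (‖p‖ * ‖p‖)
        = ‖q‖ * ‖q‖ * (p.re ^ 2 + p.imI ^ 2 + p.imJ ^ 2 + p.imK ^ 2) := by rw [hpn]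
    nlinarith [h1, h5, hx]
  · have hb : p.imI = 0 := by
      rcases mul_eq_zero.1 (show p.imI * (‖q‖ * ‖q‖ * p.re - q.re) = 0 by ring_nf; ring_nf at h2; linarith) with h | h
      · exact h
      · exact absurd (by linarith : ‖q‖ * ‖q‖ * p.re = q.re) hc
    have hcJ : p.imJ = 0 := by
      rcases mul_eq_zero.1 (show p.imJ * (‖q‖ * ‖q‖ * p.re - q.re) = 0 by ring_nf; ring_nf at h3; linarith) with h | h
      · exact h
      · exact absurd (by linarith : ‖q‖ * ‖q‖ * p.re = q.re) hc
    have hdK : p.imK = 0 := by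
      rcases mul_eq_zero.1 (show p.imK * (‖q‖ * ‖q‖ * p.re - q.re) = 0 by ring_nf; ring_nf at h4; linarith) with h | h
      · exact h
      · exact absurd (by linarith : ‖q‖ * ‖q‖ * p.re = q.re) hc
    rw [hb, hcJ, hdK] at h1 hpn
    clear h h2 h3 h4
    have hSa : 0 ≤ (‖q‖ * ‖q‖ - q.re ^ 2) * p.re ^ 2 :=
      mul_nonneg (by linarith) (sq_nonneg p.re)
    have hpre : p.re ^ 2 = ‖p‖ * ‖p‖ := by rw [hpn]; ring
    have h6 : (q.re * p.re) ^ 2 ≤ (‖q‖ * ‖p‖) * (‖q‖ * ‖p‖) := by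
      calc (q.re * p.re) ^ 2 = q.re ^ 2 * p.re ^ 2 := by ring
        _ ≤ (‖q‖ * ‖q‖) * p.re ^ 2 := mul_le_mul_of_nonneg_right hSq2 (sq_nonneg p.re)
        _ = (‖q‖ * ‖p‖) * (‖q‖ * ‖p‖) := by rw [hpre]; ring
    have h7 : (q.re * p.re) ^ 2 < 1 := lt_of_le_of_lt h6 hx
    have hqa : q.re * p.re < 1 := by nlinarith [h7, sq_nonneg (q.re * p.re - 1)]
    have hpos : (0:ℝ) < 1 - q.re * p.re := by linarith
    linarith [h1, mul_pos hpos hpos, hSa]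
end

section
/- For quaternions p, q with |p| < 1 and |q| < 1, the sum of the series ∑_{n=0}^∞ pⁿ conj(q)ⁿ equals (1 - 2Re(q)·p + |q|²·p²)⁻¹ · (1 - p·q). -/
open scoped Quaternion

theorem szego_kernel_closed_form (p q : ℍ[ℝ]) (hp : ‖p‖ < 1) (hq : ‖q‖ < 1) :
    ∑' n : ℕ, p ^ n * (star q) ^ n =
      ((1 : ℍ[ℝ]) - (2 * q.re) • p + (‖q‖ ^ 2) • p ^ 2)⁻¹ * (1 - p * q) := by
  have hs : Summable (fun n : ℕ => p ^ n * (star q) ^ n) := by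
    apply Summable.of_norm
    have h : ∀ n : ℕ, ‖p ^ n * (star q) ^ n‖ = (‖p‖ * ‖q‖) ^ n := by
      intro n; rw [norm_mul, norm_pow, norm_pow, norm_star, mul_pow]
    simp only [h]
    exact summable_geometric_of_lt_one (by positivity)
      (mul_lt_one_of_nonneg_of_lt_one_left (norm_nonneg p) hp hq.le)
  set S : ℍ[ℝ] := ∑' n : ℕ, p ^ n * (star q) ^ n with hS
  have hrec : S = 1 + p * S * star q := by
    have h : ∀ n : ℕ, p ^ (n+1) * (star q) ^ (n+1) = p * (p ^ n * (star q) ^ n) * star q := by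
      intro n; rw [pow_succ', pow_succ]; simp only [mul_assoc]
    calc S = p ^ 0 * (star q) ^ 0 + ∑' n : ℕ, p ^ (n+1) * (star q) ^ (n+1) :=
          Summable.tsum_eq_zero_add hs
      _ = 1 + p * S * star q := by
          simp only [h, pow_zero, one_mul]
          rw [tsum_mul_right, tsum_mul_left]
  have hps : p * S * star q = S - 1 := by
    nth_rewrite 2 [hrec]
    abel
  have hb : ((‖q‖^2 : ℝ) : ℍ[ℝ]) = star q * q := by
    rw [Quaternion.star_mul_self]
    rw [Quaternion.normSq_eq_norm_mul_self, sq]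
  have h1 : ((2*q.re : ℝ) : ℍ[ℝ]) * p * S = p * S * q + (S - 1) := by
    rw [mul_assoc, Quaternion.coe_commutes, ← Quaternion.self_add_star', mul_add, hps]
  have h2 : ((‖q‖^2 : ℝ) : ℍ[ℝ]) * p^2 * S = p * S * q - p * q := by
    rw [mul_assoc, Quaternion.coe_commutes, hb, sq]
    calc p * p * S * (star q * q) = p * (p * S * star q) * q := by simp only [mul_assoc]
      _ = p * (S - 1) * q := by rw [hps]
      _ = p * S * q - p * q := by rw [mul_sub, mul_one, sub_mul]
  have key : ((1 : ℍ[ℝ]) - (2 * q.re) • p + (‖q‖ ^ 2) • p ^ 2) * S = 1 - p * q := by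
    simp only [← Quaternion.coe_mul_eq_smul]
    rw [add_mul, sub_mul, one_mul, h1, h2]
    abel
  have hA : ((1 : ℍ[ℝ]) - (2 * q.re) • p + (‖q‖ ^ 2) • p ^ 2) ≠ 0 := by
    intro h0
    rw [h0, zero_mul] at key
    have hpq : ‖p * q‖ < 1 := by
      rw [norm_mul]
      exact mul_lt_one_of_nonneg_of_lt_one_left (norm_nonneg p) hp hq.le
    have : p * q ≠ 1 := by
      intro h1'; rw [h1', norm_one] at hpq; exact lt_irrefl 1 hpq
    exact this (eq_of_sub_eq_zero key.symm).symm
  rw [← key, inv_mul_cancel_left₀ hA]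
end

section
/- For quaternions p, q with |p| < 1 and |q| < 1, (1 - 2Re(q)·p + |q|²·p²)⁻¹ · (1 - p·q) = (1 - conj(p)·conj(q)) · (1 - 2Re(p)·conj(q) + |p|²·conj(q)²)⁻¹. -/
open scoped Quaternion

open Quaternion in
lemma szego_aux_ne (p q : ℍ[ℝ]) (h : ‖p‖ * ‖q‖ < 1) :
    ((1 : ℍ[ℝ]) - (2 * q.re) • p + (‖q‖ ^ 2) • p ^ 2) ≠ 0 := by
  intro h0
  have hs : (‖q‖ ^ 2 : ℝ) = normSq q := by rw [sq, ← normSq_eq_norm_mul_self]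
  rw [hs] at h0
  have hlt : (normSq p : ℝ) * normSq q < 1 := by
    nlinarith [normSq_eq_norm_mul_self p, normSq_eq_norm_mul_self q, norm_nonneg p,
      norm_nonneg q, mul_nonneg (norm_nonneg p) (norm_nonneg q)]
  have hnp : (normSq p : ℝ) = p.re ^ 2 + p.imI ^ 2 + p.imJ ^ 2 + p.imK ^ 2 := normSq_def' p
  have hr : q.re ^ 2 ≤ (normSq q : ℝ) := by
    rw [normSq_def']; nlinarith [sq_nonneg q.imI, sq_nonneg q.imJ, sq_nonneg q.imK]
  have e0 := congrArg QuaternionAlgebra.re h0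
  have e1 := congrArg QuaternionAlgebra.imI h0
  have e2 := congrArg QuaternionAlgebra.imJ h0
  have e3 := congrArg QuaternionAlgebra.imK h0
  simp only [Quaternion.re_add, Quaternion.re_sub, Quaternion.re_smul, Quaternion.re_one,
    Quaternion.imI_add, Quaternion.imI_sub, Quaternion.imI_smul, Quaternion.imI_one,
    Quaternion.imJ_add, Quaternion.imJ_sub, Quaternion.imJ_smul, Quaternion.imJ_one,
    Quaternion.imK_add, Quaternion.imK_sub, Quaternion.imK_smul, Quaternion.imK_one,
    sq, Quaternion.re_mul, Quaternion.imI_mul, Quaternion.imJ_mul, Quaternion.imK_mul,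
    Quaternion.re_zero, Quaternion.imI_zero, Quaternion.imJ_zero, Quaternion.imK_zero,
    smul_eq_mul] at e0 e1 e2 e3
  set a := p.re with ha
  set s := (normSq q : ℝ) with hsdef
  by_cases hc : p.imI = 0 ∧ p.imJ = 0 ∧ p.imK = 0
  · obtain ⟨hb, hcc, hd⟩ := hc
    rw [hb, hcc, hd] at e0 hnp
    have ht : s * a ^ 2 < 1 := by nlinarith [hlt, hnp]
    have h1 : (1 + s * a ^ 2) = 2 * q.re * a := by nlinarith [e0]
    have h2 : (1 + s * a ^ 2) ^ 2 ≤ 4 * (s * a ^ 2) := by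
      rw [h1]; nlinarith [mul_le_mul_of_nonneg_right hr (sq_nonneg a)]
    nlinarith [h2, mul_pos (by linarith : (0:ℝ) < 1 - s * a ^ 2)
      (by linarith : (0:ℝ) < 1 - s * a ^ 2)]
  · have hre : s * a = q.re := by
      rcases not_and_or.mp hc with hb | h'
      · have h1 : p.imI * (q.re - s * a) = 0 := by linear_combination (-1/2 : ℝ) * e1
        rcases mul_eq_zero.mp h1 with h1 | h1
        · exact absurd h1 hb
        · linarith
      rcases not_and_or.mp h' with hcx | hd
      · have h1 : p.imJ * (q.re - s * a) = 0 := by linear_combination (-1/2 : ℝ) * e2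
        rcases mul_eq_zero.mp h1 with h1 | h1
        · exact absurd h1 hcx
        · linarith
      · have h1 : p.imK * (q.re - s * a) = 0 := by linear_combination (-1/2 : ℝ) * e3
        rcases mul_eq_zero.mp h1 with h1 | h1
        · exact absurd h1 hd
        · linarith
    have hfin : s * (normSq p : ℝ) = 1 := by
      rw [hnp]; linear_combination -e0 + 2 * a * hre
    nlinarith [hlt, hfin]

open Quaternion in
lemma szego_aux_key (p q : ℍ[ℝ]) :
    (1 - p * q) * ((1 : ℍ[ℝ]) - (2 * p.re) • star q + (‖p‖ ^ 2) • (star q) ^ 2) =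
      ((1 : ℍ[ℝ]) - (2 * q.re) • p + (‖q‖ ^ 2) • p ^ 2) * (1 - star p * star q) := by
  have hsp : (‖p‖ ^ 2 : ℝ) = normSq p := by rw [sq, ← normSq_eq_norm_mul_self]
  have hsq : (‖q‖ ^ 2 : ℝ) = normSq q := by rw [sq, ← normSq_eq_norm_mul_self]
  rw [hsp, hsq]
  ext <;>
    simp only [Quaternion.normSq_def', Quaternion.re_mul, Quaternion.imI_mul, Quaternion.imJ_mul,
      Quaternion.imK_mul, Quaternion.re_add, Quaternion.imI_add, Quaternion.imJ_add,
      Quaternion.imK_add, Quaternion.re_sub, Quaternion.imI_sub, Quaternion.imJ_sub,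
      Quaternion.imK_sub, Quaternion.re_smul, Quaternion.imI_smul, Quaternion.imJ_smul,
      Quaternion.imK_smul, Quaternion.re_one, Quaternion.imI_one, Quaternion.imJ_one,
      Quaternion.imK_one, Quaternion.re_star, Quaternion.imI_star, Quaternion.imJ_star,
      Quaternion.imK_star, sq, smul_eq_mul] <;> ring

theorem szego_kernel_two_forms (p q : ℍ[ℝ]) (hp : ‖p‖ < 1) (hq : ‖q‖ < 1) :
    ((1 : ℍ[ℝ]) - (2 * q.re) • p + (‖q‖ ^ 2) • p ^ 2)⁻¹ * (1 - p * q) =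
      (1 - star p * star q) *
        ((1 : ℍ[ℝ]) - (2 * p.re) • star q + (‖p‖ ^ 2) • (star q) ^ 2)⁻¹ := by
  have hpq : ‖p‖ * ‖q‖ < 1 := by nlinarith [norm_nonneg p, norm_nonneg q]
  have hA : ((1 : ℍ[ℝ]) - (2 * q.re) • p + (‖q‖ ^ 2) • p ^ 2) ≠ 0 := szego_aux_ne p q hpq
  have hD : ((1 : ℍ[ℝ]) - (2 * p.re) • star q + (‖p‖ ^ 2) • (star q) ^ 2) ≠ 0 := by
    have : ‖star q‖ * ‖p‖ < 1 := by rw [norm_star]; linarith [hpq, mul_comm ‖p‖ ‖q‖]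
    simpa using szego_aux_ne (star q) p this
  set A := ((1 : ℍ[ℝ]) - (2 * q.re) • p + (‖q‖ ^ 2) • p ^ 2) with hAdef
  set D := ((1 : ℍ[ℝ]) - (2 * p.re) • star q + (‖p‖ ^ 2) • (star q) ^ 2) with hDdef
  set B := (1 - p * q) with hBdef
  set C := (1 - star p * star q) with hCdef
  have key : B * D = A * C := szego_aux_key p q
  calc A⁻¹ * B = A⁻¹ * ((B * D) * D⁻¹) := by
        rw [mul_assoc B D, mul_inv_cancel₀ hD, mul_one]
    _ = A⁻¹ * (A * (C * D⁻¹)) := by rw [key, mul_assoc]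
    _ = C * D⁻¹ := by rw [← mul_assoc, inv_mul_cancel₀ hA, one_mul]
end

section
/- The kernel k(p,q) = ∑_{n=0}^∞ pⁿ conj(q)ⁿ is positive definite on the open unit ball 𝔹 of the quaternions: for every N, every p₁,…,p_N ∈ 𝔹 and c₁,…,c_N ∈ ℍ, the real number ∑_{ℓ,j} conj(c_ℓ) · k(p_ℓ, p_j) · c_j is nonnegative (and is indeed real). -/
set_option maxHeartbeats 1000000

open scoped Quaternion

lemma szego_summable (a b : ℍ[ℝ]) (ha : ‖a‖ < 1) (hb : ‖b‖ < 1) :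
    Summable (fun n : ℕ => a ^ n * (star b) ^ n) := by
  apply Summable.of_norm
  refine Summable.of_nonneg_of_le (fun n => norm_nonneg _) (fun n => ?_)
    (summable_geometric_of_lt_one (r := ‖a‖ * ‖b‖) (by positivity)
      (by nlinarith [norm_nonneg a, norm_nonneg b]))
  calc ‖a ^ n * (star b) ^ n‖ = ‖a‖ ^ n * ‖star b‖ ^ n := by rw [norm_mul, norm_pow, norm_pow]
      _ = (‖a‖ * ‖b‖) ^ n := by rw [norm_star, mul_pow]
      _ ≤ (‖a‖ * ‖b‖) ^ n := le_refl _

theorem szego_kernel_posdef (N : ℕ) (p : Fin N → ℍ[ℝ]) (c : Fin N → ℍ[ℝ])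
    (hp : ∀ i, ‖p i‖ < 1) :
    (((∑ l, ∑ j, star (c l) * (∑' n : ℕ, (p l) ^ n * (star (p j)) ^ n) * c j).re : ℝ) :
        ℍ[ℝ]) = ∑ l, ∑ j, star (c l) * (∑' n : ℕ, (p l) ^ n * (star (p j)) ^ n) * c j ∧
      0 ≤ (∑ l, ∑ j, star (c l) * (∑' n : ℕ, (p l) ^ n * (star (p j)) ^ n) * c j).re := by
  set v : ℕ → ℍ[ℝ] := fun n => ∑ j, (star (p j)) ^ n * c j with hv
  have hsum : ∀ l j : Fin N, Summable (fun n : ℕ =>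
      star (c l) * ((p l) ^ n * (star (p j)) ^ n) * c j) := fun l j =>
    (((szego_summable _ _ (hp l) (hp j)).mul_left (star (c l))).mul_right (c j))
  have key : (∑ l, ∑ j, star (c l) * (∑' n : ℕ, (p l) ^ n * (star (p j)) ^ n) * c j)
      = ∑' n : ℕ, ((Quaternion.normSq (v n) : ℝ) : ℍ[ℝ]) := by
    have h1 : ∀ l j : Fin N, star (c l) * (∑' n : ℕ, (p l) ^ n * (star (p j)) ^ n) * c j
        = ∑' n : ℕ, star (c l) * ((p l) ^ n * (star (p j)) ^ n) * c j := by
      intro l j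
      rw [← tsum_mul_left, ← tsum_mul_right]
    calc (∑ l, ∑ j, star (c l) * (∑' n : ℕ, (p l) ^ n * (star (p j)) ^ n) * c j)
        = ∑ l, ∑' n : ℕ, ∑ j, star (c l) * ((p l) ^ n * (star (p j)) ^ n) * c j := by
          refine Finset.sum_congr rfl fun l _ => ?_
          rw [Summable.tsum_finsetSum fun j _ => hsum l j]
          exact Finset.sum_congr rfl fun j _ => h1 l j
      _ = ∑' n : ℕ, ∑ l, ∑ j, star (c l) * ((p l) ^ n * (star (p j)) ^ n) * c j := by
          rw [Summable.tsum_finsetSum fun l _ => (hasSum_sum fun j _ => (hsum l j).hasSum).summable]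
      _ = ∑' n : ℕ, ((Quaternion.normSq (v n) : ℝ) : ℍ[ℝ]) := by
          refine tsum_congr fun n => ?_
          rw [show ((Quaternion.normSq (v n) : ℝ) : ℍ[ℝ]) = star (v n) * v n from
            (Quaternion.star_mul_self _).symm, hv]
          rw [star_sum, Finset.sum_mul_sum]
          refine Finset.sum_congr rfl fun l _ => Finset.sum_congr rfl fun j _ => ?_
          rw [star_mul, star_pow, star_star]
          noncomm_ring
  have hvsum : Summable (fun n : ℕ => Quaternion.normSq (v n)) := by
    refine Summable.of_nonneg_of_le (fun n => Quaternion.normSq_nonneg)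
      (fun n => ?_)
      ((hasSum_sum fun l (_ : l ∈ Finset.univ) => ((hasSum_sum fun j (_ : j ∈ Finset.univ) =>
        (((summable_geometric_of_lt_one
          (r := ‖p l‖ * ‖p j‖) (by positivity)
          (by nlinarith [norm_nonneg (p l), norm_nonneg (p j), hp l, hp j])).mul_left
          (‖c l‖ * ‖c j‖)).hasSum)).summable).hasSum).summable)
    · have h2 : ‖v n‖ ≤ ∑ j, ‖c j‖ * ‖p j‖ ^ n := by
        refine (norm_sum_le _ _).trans (Finset.sum_le_sum fun j _ => ?_)
        rw [norm_mul, norm_pow, norm_star]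
        ring_nf
        exact le_refl _
      calc Quaternion.normSq (v n) = ‖v n‖ * ‖v n‖ := Quaternion.normSq_eq_norm_mul_self _
        _ ≤ (∑ j, ‖c j‖ * ‖p j‖ ^ n) * (∑ j, ‖c j‖ * ‖p j‖ ^ n) := by
            apply mul_le_mul h2 h2 (norm_nonneg _)
            positivity
        _ = ∑ l, ∑ j, (‖c l‖ * ‖c j‖) * (‖p l‖ * ‖p j‖) ^ n := by
            rw [Finset.sum_mul_sum]
            refine Finset.sum_congr rfl fun l _ => Finset.sum_congr rfl fun j _ => ?_
            rw [mul_pow]; ring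
  have hcoe : (∑' n : ℕ, ((Quaternion.normSq (v n) : ℝ) : ℍ[ℝ]))
      = ((∑' n : ℕ, Quaternion.normSq (v n) : ℝ) : ℍ[ℝ]) := by
    have := (hvsum.hasSum.map (algebraMap ℝ ℍ[ℝ]) (continuous_algebraMap ℝ ℍ[ℝ])).tsum_eq
    simpa [Quaternion.algebraMap_def, Function.comp] using this
  have hre : (∑ l, ∑ j, star (c l) * (∑' n : ℕ, (p l) ^ n * (star (p j)) ^ n) * c j).re
      = ∑' n : ℕ, Quaternion.normSq (v n) := by
    rw [key, hcoe, Quaternion.re_coe]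
  exact ⟨by rw [hre, key, hcoe], hre ▸ tsum_nonneg fun n => Quaternion.normSq_nonneg⟩
end

section
/- Let A be a bounded right-linear operator on a two-sided quaternionic Banach space (or an n×n quaternionic matrix) and let r be a quaternion with ‖A‖ < |r|. Then the operator A² - 2Re(r)·A + |r|²·I is invertible and ∑_{n=0}^∞ Aⁿ r^{-1-n} = -(A² - 2Re(r)A + |r|²I)⁻¹ (A - conj(r)·I). -/
open scoped Quaternion
attribute [local instance] Matrix.linftyOpNormedRing

set_option maxHeartbeats 1000000
namespace LeftSRes
variable {n : ℕ}
local notation "M" => Matrix (Fin n) (Fin n) ℍ[ℝ]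

lemma norm_smul_one_le (c : ℍ[ℝ]) : ‖c • (1 : M)‖ ≤ ‖c‖ := by
  rw [Matrix.smul_one_eq_diagonal, Matrix.linfty_opNorm_diagonal]
  exact (pi_norm_le_iff_of_nonneg (norm_nonneg c)).2 fun i => le_rfl

lemma coe_smul (x : ℝ) (X : M) : x • X = (x : ℍ[ℝ]) • X := by
  refine Matrix.ext fun i j => ?_
  show (x • X i j) = (x : ℍ[ℝ]) * X i j
  exact (Quaternion.coe_mul_eq_smul x (X i j)).symm

lemma rsmul_pow_mul (A : M) (x : ℝ) (m : ℕ) (c : ℍ[ℝ]) :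
    x • (A ^ m * (c • (1 : M))) = A ^ m * (((x : ℍ[ℝ]) * c) • (1 : M)) := by
  rw [← mul_smul_comm, ← smul_assoc, ← Quaternion.coe_mul_eq_smul]

lemma key (A : M) (a2 b : ℝ) (t : ℕ → ℍ[ℝ])
    (hsum : Summable fun k => A ^ k * (t k • (1 : M)))
    (hrec : ∀ k, (b : ℍ[ℝ]) * t (k + 2) = (a2 : ℍ[ℝ]) * t (k + 1) - t k) :
    (A ^ 2 - a2 • A + b • (1 : M)) * ∑' k, A ^ k * (t k • (1 : M)) =
      ((b : ℍ[ℝ]) * t 0) • (1 : M) +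
        A * (((b : ℍ[ℝ]) * t 1 - (a2 : ℍ[ℝ]) * t 0) • (1 : M)) := by
  set f : ℕ → M := fun k => A ^ k * (t k • (1 : M)) with hf
  set S : M := ∑' k, f k with hS
  -- pointwise identities
  have h2 : ∀ k, A ^ 2 * f k = A ^ (k + 2) * (t k • (1 : M)) := by
    intro k; rw [hf]; rw [← mul_assoc, ← pow_add, Nat.add_comm]
  have h3 : ∀ k, b • f k = A ^ k * (((b : ℍ[ℝ]) * t k) • (1 : M)) := fun k =>
    rsmul_pow_mul A b k (t k)
  have h4 : ∀ k, a2 • (A * f k) = A ^ (k + 1) * (((a2 : ℍ[ℝ]) * t k) • (1 : M)) := by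
    intro k
    rw [hf, ← mul_assoc, ← pow_succ']
    exact rsmul_pow_mul A a2 (k + 1) (t k)
  -- summabilities
  have sb : Summable fun k => A ^ k * (((b : ℍ[ℝ]) * t k) • (1 : M)) := by
    have := hsum.const_smul b
    simpa only [h3] using this
  have sa : Summable fun k => A ^ (k + 1) * (((a2 : ℍ[ℝ]) * t k) • (1 : M)) := by
    have := (hsum.mul_left A).const_smul a2
    simpa only [h4] using this
  have s2 : Summable fun k => A ^ (k + 2) * (t k • (1 : M)) := by
    have := hsum.mul_left (A ^ 2)
    simpa only [h2] using this
  have sb2 : Summable fun k => A ^ (k + 2) * (((b : ℍ[ℝ]) * t (k + 2)) • (1 : M)) :=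
    (summable_nat_add_iff 2).2 sb
  have sa1 : Summable fun k => A ^ (k + 2) * (((a2 : ℍ[ℝ]) * t (k + 1)) • (1 : M)) :=
    (summable_nat_add_iff 1).2 sa
  -- expansions of each of the three pieces
  have h2S : A ^ 2 * S = ∑' k, A ^ (k + 2) * (t k • (1 : M)) := by
    rw [hS, ← hsum.tsum_mul_left (A ^ 2)]
    exact tsum_congr h2
  have haS : a2 • (A * S) =
      A * (((a2 : ℍ[ℝ]) * t 0) • (1 : M)) +
        ∑' k, A ^ (k + 2) * (((a2 : ℍ[ℝ]) * t (k + 1)) • (1 : M)) := by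
    rw [hS, ← hsum.tsum_mul_left A, ← ((hsum.mul_left A).hasSum.const_smul a2).tsum_eq]
    rw [tsum_congr h4, Summable.tsum_eq_zero_add sa]
    rw [pow_one]
  have hbS : b • S =
      (((b : ℍ[ℝ]) * t 0) • (1 : M) + A * (((b : ℍ[ℝ]) * t 1) • (1 : M))) +
        ∑' k, A ^ (k + 2) * (((b : ℍ[ℝ]) * t (k + 2)) • (1 : M)) := by
    rw [hS, ← (hsum.hasSum.const_smul b).tsum_eq]
    rw [tsum_congr h3, Summable.tsum_eq_zero_add sb, Summable.tsum_eq_zero_add ((summable_nat_add_iff 1).2 sb)]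
    rw [pow_zero, one_mul, pow_one, add_assoc]
  -- the tail vanishes
  have htail : (∑' k, A ^ (k + 2) * (t k • (1 : M))) -
      (∑' k, A ^ (k + 2) * (((a2 : ℍ[ℝ]) * t (k + 1)) • (1 : M))) +
      (∑' k, A ^ (k + 2) * (((b : ℍ[ℝ]) * t (k + 2)) • (1 : M))) = 0 := by
    rw [← Summable.tsum_sub s2 sa1, ← Summable.tsum_add (s2.sub sa1) sb2]
    have : ∀ k : ℕ, A ^ (k + 2) * (t k • (1 : M)) -
        A ^ (k + 2) * (((a2 : ℍ[ℝ]) * t (k + 1)) • (1 : M)) +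
        A ^ (k + 2) * (((b : ℍ[ℝ]) * t (k + 2)) • (1 : M)) = 0 := by
      intro k
      rw [← mul_sub, ← mul_add, ← sub_smul, ← add_smul]
      have : t k - (a2 : ℍ[ℝ]) * t (k + 1) + (b : ℍ[ℝ]) * t (k + 2) = 0 := by
        rw [hrec k]; abel
      rw [this, zero_smul, mul_zero]
    rw [tsum_congr this, tsum_zero]
  -- assemble
  have hexp : (A ^ 2 - a2 • A + b • (1 : M)) * S = A ^ 2 * S - a2 • (A * S) + b • S := by
    rw [add_mul, sub_mul, smul_mul_assoc, smul_mul_assoc, one_mul]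
  rw [hexp, h2S, haS, hbS]
  have hsub : A * (((b : ℍ[ℝ]) * t 1 - (a2 : ℍ[ℝ]) * t 0) • (1 : M)) =
      A * (((b : ℍ[ℝ]) * t 1) • (1 : M)) - A * (((a2 : ℍ[ℝ]) * t 0) • (1 : M)) := by
    rw [sub_smul, mul_sub]
  rw [hsub]
  set X := ∑' k, A ^ (k + 2) * (t k • (1 : M))
  set Y := ∑' k, A ^ (k + 2) * (((a2 : ℍ[ℝ]) * t (k + 1)) • (1 : M))
  set Z := ∑' k, A ^ (k + 2) * (((b : ℍ[ℝ]) * t (k + 2)) • (1 : M))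
  set U := ((b : ℍ[ℝ]) * t 0) • (1 : M)
  set V := A * (((b : ℍ[ℝ]) * t 1) • (1 : M))
  set W := A * (((a2 : ℍ[ℝ]) * t 0) • (1 : M))
  calc X - (W + Y) + (U + V + Z) = (X - Y + Z) + (U + (V - W)) := by abel
    _ = U + (V - W) := by rw [htail, zero_add]



/-- Coefficients of the inverse of the companion polynomial. -/
noncomputable def c (r : ℍ[ℝ]) (k : ℕ) : ℍ[ℝ] :=
  ∑ i ∈ Finset.range (k + 1), r⁻¹ ^ (i + 1) * (star r)⁻¹ ^ (k - i + 1)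

variable (r : ℍ[ℝ])

lemma commute_star : Commute r (star r) := by
  have h : Commute (star r) r := star_comm_self' r
  exact h.symm

lemma hpow (hr : r ≠ 0) (m : ℕ) : r * r⁻¹ ^ (m + 1) = r⁻¹ ^ m := by
  rw [pow_succ', ← mul_assoc, mul_inv_cancel₀ hr, one_mul]

lemma R1r (hr : r ≠ 0) (k : ℕ) :
    r * c r (k + 1) = c r k + (star r)⁻¹ ^ (k + 2) := by
  simp only [c]
  rw [Finset.sum_range_succ', mul_add, Finset.mul_sum]
  congr 1
  · refine Finset.sum_congr rfl fun i hi => ?_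
    have hik : i ≤ k := Nat.lt_succ_iff.mp (Finset.mem_range.mp hi)
    rw [← mul_assoc, hpow r hr (i + 1)]
    congr 2
    omega
  · rw [← mul_assoc, hpow r hr 0, pow_zero, one_mul]
    norm_num

lemma star_c (k : ℕ) : star (c r k) = c r k := by
  simp only [c]
  rw [star_sum]
  rw [← Finset.sum_range_reflect]
  refine Finset.sum_congr rfl fun i hi => ?_
  have hik : i ≤ k := Nat.lt_succ_iff.mp (Finset.mem_range.mp hi)
  rw [star_mul, star_pow, star_pow, star_inv₀, star_inv₀, star_star]
  congr 2
  all_goals omega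

lemma c_eq_re (k : ℕ) : c r k = (((c r k).re : ℝ) : ℍ[ℝ]) :=
  Quaternion.star_eq_self.mp (star_c r k)

lemma norm_c_le (k : ℕ) : ‖c r k‖ ≤ (k + 1 : ℝ) * (‖r‖⁻¹) ^ (k + 2) := by
  simp only [c]
  refine (norm_sum_le _ _).trans ?_
  have : ∀ i ∈ Finset.range (k + 1),
      ‖r⁻¹ ^ (i + 1) * (star r)⁻¹ ^ (k - i + 1)‖ = (‖r‖⁻¹) ^ (k + 2) := by
    intro i hi
    have hik : i ≤ k := Nat.lt_succ_iff.mp (Finset.mem_range.mp hi)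
    rw [norm_mul, norm_pow, norm_pow, norm_inv, norm_inv, norm_star, ← pow_add]
    congr 1
    omega
  rw [Finset.sum_congr rfl this, Finset.sum_const, Finset.card_range, nsmul_eq_mul]
  push_cast
  exact le_rfl


lemma b_coe : ((‖r‖ ^ 2 : ℝ) : ℍ[ℝ]) = r * star r := by
  rw [Quaternion.self_mul_star,
    show (‖r‖ ^ 2 : ℝ) = Quaternion.normSq r by
      rw [Quaternion.normSq_eq_norm_mul_self, sq]]

lemma a_coe : ((2 * r.re : ℝ) : ℍ[ℝ]) = r + star r := (Quaternion.self_add_star' r).symm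

lemma v_pow (hr : r ≠ 0) (k : ℕ) :
    (star r)⁻¹ ^ (k + 2) = r * c r (k + 1) - c r k := by
  rw [R1r r hr k]; abel

lemma crec (hr : r ≠ 0) (k : ℕ) :
    ((‖r‖ ^ 2 : ℝ) : ℍ[ℝ]) * c r (k + 2) =
      ((2 * r.re : ℝ) : ℍ[ℝ]) * c r (k + 1) - c r k := by
  have hsr : star r ≠ 0 := star_ne_zero.mpr hr
  have hcomm : r * star r = star r * r := (commute_star r).eq
  rw [b_coe, a_coe, hcomm]
  calc star r * r * c r (k + 2) = star r * (r * c r (k + 2)) := by rw [mul_assoc]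
    _ = star r * (c r (k + 1) + (star r)⁻¹ ^ (k + 3)) := by rw [R1r r hr (k + 1)]
    _ = star r * c r (k + 1) + (star r)⁻¹ ^ (k + 2) := by
        rw [mul_add, hpow (star r) hsr (k + 2)]
    _ = star r * c r (k + 1) + (r * c r (k + 1) - c r k) := by rw [v_pow r hr k]
    _ = (r + star r) * c r (k + 1) - c r k := by rw [add_mul]; abel

lemma r_mul_c0 (hr : r ≠ 0) : r * c r 0 = (star r)⁻¹ := by
  simp only [c]
  rw [Finset.sum_range_one]
  norm_num
  rw [← mul_assoc, mul_inv_cancel₀ hr, one_mul]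

lemma b_mul_c0 (hr : r ≠ 0) : ((‖r‖ ^ 2 : ℝ) : ℍ[ℝ]) * c r 0 = 1 := by
  have hsr : star r ≠ 0 := star_ne_zero.mpr hr
  have hcomm : r * star r = star r * r := (commute_star r).eq
  rw [b_coe, hcomm, mul_assoc, r_mul_c0 r hr, mul_inv_cancel₀ hsr]

lemma b_mul_c1 (hr : r ≠ 0) :
    ((‖r‖ ^ 2 : ℝ) : ℍ[ℝ]) * c r 1 = ((2 * r.re : ℝ) : ℍ[ℝ]) * c r 0 := by
  have hsr : star r ≠ 0 := star_ne_zero.mpr hr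
  have hcomm : r * star r = star r * r := (commute_star r).eq
  rw [b_coe, a_coe, hcomm]
  calc star r * r * c r 1 = star r * (r * c r 1) := by rw [mul_assoc]
    _ = star r * (c r 0 + (star r)⁻¹ ^ 2) := by rw [R1r r hr 0]
    _ = star r * c r 0 + (star r)⁻¹ := by
        rw [mul_add, show ((star r)⁻¹ ^ 2 : ℍ[ℝ]) = (star r)⁻¹ ^ (1 + 1) from rfl,
          hpow (star r) hsr 1, pow_one]
    _ = (r + star r) * c r 0 := by rw [add_mul, r_mul_c0 r hr]; abel

lemma srec (hr : r ≠ 0) (k : ℕ) :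
    ((‖r‖ ^ 2 : ℝ) : ℍ[ℝ]) * r⁻¹ ^ (k + 2 + 1) =
      ((2 * r.re : ℝ) : ℍ[ℝ]) * r⁻¹ ^ (k + 1 + 1) - r⁻¹ ^ (k + 1) := by
  have hcomm : r * star r = star r * r := (commute_star r).eq
  rw [b_coe, a_coe, hcomm]
  calc star r * r * r⁻¹ ^ (k + 2 + 1) = star r * (r * r⁻¹ ^ (k + 2 + 1)) := by rw [mul_assoc]
    _ = star r * r⁻¹ ^ (k + 2) := by rw [hpow r hr (k + 2)]
    _ = (r + star r) * r⁻¹ ^ (k + 1 + 1) - r⁻¹ ^ (k + 1) := by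
        rw [add_mul, hpow r hr (k + 1)]; abel

lemma b_s0 (hr : r ≠ 0) : ((‖r‖ ^ 2 : ℝ) : ℍ[ℝ]) * r⁻¹ ^ (0 + 1) = star r := by
  have hcomm : r * star r = star r * r := (commute_star r).eq
  rw [b_coe, hcomm, pow_one, mul_assoc, mul_inv_cancel₀ hr, mul_one]

lemma b_s1 (hr : r ≠ 0) :
    ((‖r‖ ^ 2 : ℝ) : ℍ[ℝ]) * r⁻¹ ^ (1 + 1) - ((2 * r.re : ℝ) : ℍ[ℝ]) * r⁻¹ ^ (0 + 1) = -1 := by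
  have hcomm : r * star r = star r * r := (commute_star r).eq
  rw [b_coe, a_coe, hcomm, pow_one, mul_assoc,
    show (r⁻¹ ^ (1 + 1) : ℍ[ℝ]) = r⁻¹ ^ (1 + 1) from rfl, hpow r hr 1, pow_one,
    add_mul, mul_inv_cancel₀ hr]
  abel


lemma norm_term_le [NeZero n] (A : M) (k : ℕ) (t : ℍ[ℝ]) :
    ‖A ^ k * (t • (1 : M))‖ ≤ ‖A‖ ^ k * ‖t‖ :=
  (norm_mul_le _ _).trans
    (mul_le_mul (norm_pow_le A k) (norm_smul_one_le t) (norm_nonneg _)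
      (pow_nonneg (norm_nonneg A) k))

end LeftSRes

theorem left_S_resolvent_series (n : ℕ) (A : Matrix (Fin n) (Fin n) ℍ[ℝ]) (r : ℍ[ℝ])
    (h : ‖A‖ < ‖r‖) :
    IsUnit (A ^ 2 - (2 * r.re) • A + (‖r‖ ^ 2) • (1 : Matrix (Fin n) (Fin n) ℍ[ℝ])) ∧
      ∑' k : ℕ, A ^ k * ((r⁻¹ ^ (k + 1)) • (1 : Matrix (Fin n) (Fin n) ℍ[ℝ])) =
        -(Ring.inverse (A ^ 2 - (2 * r.re) • A + (‖r‖ ^ 2) • 1) *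
            (A - (star r) • (1 : Matrix (Fin n) (Fin n) ℍ[ℝ]))) := by
  rcases Nat.eq_zero_or_pos n with hn | hn
  · subst hn
    haveI hsub : Subsingleton (Matrix (Fin 0) (Fin 0) ℍ[ℝ]) :=
      ⟨fun a b => Matrix.ext fun i _ => i.elim0⟩
    exact ⟨isUnit_of_subsingleton _, Subsingleton.elim _ _⟩
  haveI : NeZero n := ⟨hn.ne'⟩
  haveI : @CompleteSpace (Matrix (Fin n) (Fin n) ℍ[ℝ]) PseudoMetricSpace.toUniformSpace :=
    inferInstanceAs (CompleteSpace (Fin n → Fin n → ℍ[ℝ]))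
  have hrpos : 0 < ‖r‖ := lt_of_le_of_lt (norm_nonneg A) h
  have hr : r ≠ 0 := fun h0 => by rw [h0, norm_zero] at hrpos; exact lt_irrefl 0 hrpos
  set b : ℝ := ‖r‖ ^ 2 with hbdef
  set a2 : ℝ := 2 * r.re with hadef
  have hq0 : (0 : ℝ) ≤ ‖A‖ * ‖r‖⁻¹ := by positivity
  have hq1 : ‖A‖ * ‖r‖⁻¹ < 1 := by
    rw [← div_eq_mul_inv]
    exact (div_lt_one hrpos).2 h
  -- Summability of the resolvent series
  have hsumS : Summable fun k : ℕ => A ^ k * ((r⁻¹ ^ (k + 1)) • (1 : Matrix (Fin n) (Fin n) ℍ[ℝ])) := by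
    refine Summable.of_norm_bounded (g := fun k => ‖r‖⁻¹ * (‖A‖ * ‖r‖⁻¹) ^ k)
      ((summable_geometric_of_lt_one hq0 hq1).mul_left _) fun k => ?_
    refine (LeftSRes.norm_term_le A k _).trans (le_of_eq ?_)
    rw [norm_pow, norm_inv]
    ring
  -- Summability of the inverse series
  set γ : ℕ → ℝ := fun k => (LeftSRes.c r k).re with hγdef
  have hγc : ∀ k, ((γ k : ℝ) : ℍ[ℝ]) = LeftSRes.c r k := fun k => (LeftSRes.c_eq_re r k).symm
  have hsumC : Summable fun k : ℕ =>
      A ^ k * (((γ k : ℝ) : ℍ[ℝ]) • (1 : Matrix (Fin n) (Fin n) ℍ[ℝ])) := by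
    have hgeo : Summable fun k : ℕ => ‖r‖⁻¹ ^ 2 * ((k + 1 : ℝ) * (‖A‖ * ‖r‖⁻¹) ^ k) := by
      refine Summable.mul_left _ ?_
      have hnlt : ‖(‖A‖ * ‖r‖⁻¹ : ℝ)‖ < 1 := by
        rwa [Real.norm_eq_abs, abs_of_nonneg hq0]
      have h1 := summable_pow_mul_geometric_of_norm_lt_one 1 hnlt
      have h0 := summable_pow_mul_geometric_of_norm_lt_one 0 hnlt
      have h10 := h1.add h0
      simp only [pow_one, pow_zero, one_mul] at h10
      refine h10.congr fun k => ?_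
      ring
    refine Summable.of_norm_bounded hgeo fun k => ?_
    refine (LeftSRes.norm_term_le A k _).trans ?_
    have hnc : ‖((γ k : ℝ) : ℍ[ℝ])‖ = ‖LeftSRes.c r k‖ := by rw [hγc]
    calc ‖A‖ ^ k * ‖((γ k : ℝ) : ℍ[ℝ])‖
        ≤ ‖A‖ ^ k * ((k + 1 : ℝ) * ‖r‖⁻¹ ^ (k + 2)) := by
          refine mul_le_mul_of_nonneg_left ?_ (pow_nonneg (norm_nonneg A) k)
          rw [hnc]
          exact LeftSRes.norm_c_le r k
      _ = ‖r‖⁻¹ ^ 2 * ((k + 1 : ℝ) * (‖A‖ * ‖r‖⁻¹) ^ k) := by ring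
  -- abbreviations
  set P : Matrix (Fin n) (Fin n) ℍ[ℝ] := A ^ 2 - a2 • A + b • 1 with hPdef
  set C : Matrix (Fin n) (Fin n) ℍ[ℝ] :=
    ∑' k : ℕ, A ^ k * (((γ k : ℝ) : ℍ[ℝ]) • (1 : Matrix (Fin n) (Fin n) ℍ[ℝ])) with hCdef
  -- the two key series identities
  have hPS : P * (∑' k : ℕ, A ^ k * ((r⁻¹ ^ (k + 1)) • (1 : Matrix (Fin n) (Fin n) ℍ[ℝ]))) =
      (((b : ℝ) : ℍ[ℝ]) * r⁻¹ ^ (0 + 1)) • 1 +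
        A * ((((b : ℝ) : ℍ[ℝ]) * r⁻¹ ^ (1 + 1) - ((a2 : ℝ) : ℍ[ℝ]) * r⁻¹ ^ (0 + 1)) • 1) :=
    LeftSRes.key A a2 b (fun k => r⁻¹ ^ (k + 1)) hsumS (fun k => LeftSRes.srec r hr k)
  rw [LeftSRes.b_s0 r hr, LeftSRes.b_s1 r hr, neg_smul, one_smul, mul_neg, mul_one] at hPS
  have hrecC : ∀ k, ((b : ℝ) : ℍ[ℝ]) * ((γ (k + 2) : ℝ) : ℍ[ℝ]) =
      ((a2 : ℝ) : ℍ[ℝ]) * ((γ (k + 1) : ℝ) : ℍ[ℝ]) - ((γ k : ℝ) : ℍ[ℝ]) := fun k => by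
    rw [hγc, hγc, hγc]
    exact LeftSRes.crec r hr k
  have hPC : P * C = (((b : ℝ) : ℍ[ℝ]) * ((γ 0 : ℝ) : ℍ[ℝ])) • 1 +
      A * ((((b : ℝ) : ℍ[ℝ]) * ((γ 1 : ℝ) : ℍ[ℝ]) - ((a2 : ℝ) : ℍ[ℝ]) * ((γ 0 : ℝ) : ℍ[ℝ])) • 1) :=
    LeftSRes.key A a2 b (fun k => ((γ k : ℝ) : ℍ[ℝ])) hsumC hrecC
  rw [hγc, hγc, LeftSRes.b_mul_c0 r hr, LeftSRes.b_mul_c1 r hr, sub_self, one_smul,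
    zero_smul, mul_zero, add_zero] at hPC
  -- C also inverts P from the left
  have hfk : ∀ k : ℕ, A ^ k * (((γ k : ℝ) : ℍ[ℝ]) • (1 : Matrix (Fin n) (Fin n) ℍ[ℝ]))
      = γ k • A ^ k := by
    intro k
    have h5 := LeftSRes.rsmul_pow_mul A (γ k) k 1
    rw [mul_one, one_smul, mul_one] at h5
    exact h5.symm
  have hAP : Commute A P := by
    have h1 : Commute A (A ^ 2) := (Commute.refl A).pow_right 2
    have h2 : Commute A (a2 • A) := (Commute.refl A).smul_right a2
    have h3 : Commute A (b • (1 : Matrix (Fin n) (Fin n) ℍ[ℝ])) :=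
      (Commute.one_right A).smul_right b
    exact (h1.sub_right h2).add_right h3
  have hCP : C * P = 1 := by
    calc C * P = ∑' k : ℕ, (A ^ k * (((γ k : ℝ) : ℍ[ℝ]) • 1)) * P :=
          (hsumC.tsum_mul_right P).symm
      _ = ∑' k : ℕ, P * (A ^ k * (((γ k : ℝ) : ℍ[ℝ]) • 1)) := by
          refine tsum_congr fun k => ?_
          rw [hfk k]
          exact ((hAP.pow_left k).smul_left (γ k)).eq
      _ = P * C := hsumC.tsum_mul_left P
      _ = 1 := hPC
  have hunit : IsUnit P := ⟨⟨P, C, hPC, hCP⟩, rfl⟩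
  refine ⟨hunit, ?_⟩
  have hinv : Ring.inverse P * P = 1 := Ring.inverse_mul_cancel P hunit
  calc (∑' k : ℕ, A ^ k * ((r⁻¹ ^ (k + 1)) • (1 : Matrix (Fin n) (Fin n) ℍ[ℝ])))
      = 1 * ∑' k : ℕ, A ^ k * ((r⁻¹ ^ (k + 1)) • (1 : Matrix (Fin n) (Fin n) ℍ[ℝ])) :=
        (one_mul _).symm
    _ = Ring.inverse P * (P * ∑' k : ℕ, A ^ k * ((r⁻¹ ^ (k + 1)) • 1)) := by
        rw [← hinv, mul_assoc]
    _ = Ring.inverse P * (star r • 1 + -A) := by rw [hPS]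
    _ = -(Ring.inverse P * (A - star r • 1)) := by
        rw [← mul_neg]
        congr 1
        rw [neg_sub]
        abel
end

section
/- Let A be a quaternionic n×n matrix and r a quaternion with ‖A‖ < |r|. Then ∑_{n=0}^∞ r^{-1-n} Aⁿ = -(A - conj(r)·I)(A² - 2Re(r)A + |r|²I)⁻¹ (the right S-resolvent identity). -/
open scoped Quaternion
open Filter Finset Topology

attribute [local instance] Matrix.linftyOpNormedRing Matrix.linftyOpNormedSpace
  Matrix.linftyOpIsBoundedSMul

namespace RightSRes

variable {n : ℕ}

private instance : CompleteSpace (Matrix (Fin n) (Fin n) ℍ[ℝ]) :=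
  FiniteDimensional.complete ℝ _

private lemma coe_smul (c : ℝ) (M : Matrix (Fin n) (Fin n) ℍ[ℝ]) :
    c • M = ((c : ℍ[ℝ])) • M := by
  rw [← algebraMap_smul ℍ[ℝ] c M]; rfl

private lemma norm_pow_le_aux (A : Matrix (Fin n) (Fin n) ℍ[ℝ]) (N : ℕ) :
    ‖A ^ N‖ ≤ ‖(1 : Matrix (Fin n) (Fin n) ℍ[ℝ])‖ * ‖A‖ ^ N := by
  induction N with
  | zero => rw [pow_zero, pow_zero, mul_one]
  | succ N ih =>
    calc ‖A ^ (N + 1)‖ = ‖A ^ N * A‖ := by rw [pow_succ]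
      _ ≤ ‖A ^ N‖ * ‖A‖ := norm_mul_le _ _
      _ ≤ (‖(1 : Matrix (Fin n) (Fin n) ℍ[ℝ])‖ * ‖A‖ ^ N) * ‖A‖ := by
          exact mul_le_mul_of_nonneg_right ih (norm_nonneg A)
      _ = ‖(1 : Matrix (Fin n) (Fin n) ℍ[ℝ])‖ * ‖A‖ ^ (N + 1) := by rw [pow_succ]; ring

private lemma summand_norm_le (A : Matrix (Fin n) (Fin n) ℍ[ℝ]) (q x : ℍ[ℝ]) (k j : ℕ) :
    ‖((q⁻¹ ^ k) * x) • A ^ j‖ ≤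
      (‖x‖ * ‖(1 : Matrix (Fin n) (Fin n) ℍ[ℝ])‖ * ‖A‖ ^ j) * (‖q‖⁻¹) ^ k := by
  calc ‖((q⁻¹ ^ k) * x) • A ^ j‖ ≤ ‖(q⁻¹ ^ k) * x‖ * ‖A ^ j‖ := norm_smul_le _ _
    _ ≤ (‖q‖⁻¹ ^ k * ‖x‖) * (‖(1 : Matrix (Fin n) (Fin n) ℍ[ℝ])‖ * ‖A‖ ^ j) := by
        apply mul_le_mul _ (norm_pow_le_aux A j) (norm_nonneg _)
          (by positivity)
        rw [norm_mul, norm_pow, norm_inv]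
    _ = (‖x‖ * ‖(1 : Matrix (Fin n) (Fin n) ℍ[ℝ])‖ * ‖A‖ ^ j) * (‖q‖⁻¹) ^ k := by ring

private lemma telescope (A : Matrix (Fin n) (Fin n) ℍ[ℝ]) (c m : ℝ) (q s : ℍ[ℝ])
    (hq : q ≠ 0) (hqs : q + s = (c : ℍ[ℝ])) (hm : q * s = (m : ℍ[ℝ])) (N : ℕ) :
    (∑ k ∈ Finset.range N, (q⁻¹ ^ (k + 1)) • A ^ k) *
        (A ^ 2 - c • A + m • (1 : Matrix (Fin n) (Fin n) ℍ[ℝ]))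
      = (q⁻¹ ^ N) • A ^ (N + 1) - ((q⁻¹ ^ N) * s) • A ^ N
        + (s • (1 : Matrix (Fin n) (Fin n) ℍ[ℝ]) - A) := by
  have key : ∀ k : ℕ, ((q⁻¹ ^ (k + 1)) • A ^ k) *
      (A ^ 2 - c • A + m • (1 : Matrix (Fin n) (Fin n) ℍ[ℝ]))
      = (q⁻¹ ^ (k + 1)) • A ^ (k + 1 + 1) - (q⁻¹ ^ k) • A ^ (k + 1)
        - ((q⁻¹ ^ (k + 1)) * s) • A ^ (k + 1) + ((q⁻¹ ^ k) * s) • A ^ k := by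
    intro k
    have hq1 : q⁻¹ ^ (k + 1) * q = q⁻¹ ^ k := by
      rw [pow_succ, mul_assoc, inv_mul_cancel₀ hq, mul_one]
    rw [Matrix.smul_mul, mul_add, mul_sub, Matrix.mul_smul, Matrix.mul_smul, mul_one,
      pow_two, ← mul_assoc, ← pow_succ, ← pow_succ, smul_add, smul_sub,
      coe_smul c, smul_smul, coe_smul m, smul_smul, ← hqs, ← hm, mul_add, hq1,
      ← mul_assoc, hq1, add_smul]
    abel
  induction N with
  | zero =>
    simp only [Finset.range_zero, Finset.sum_empty, Matrix.zero_mul, pow_zero, one_smul,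
      one_mul, zero_add, pow_one]
    abel
  | succ N ih =>
    rw [Finset.sum_range_succ, Matrix.add_mul, ih, key N]
    abel

private lemma summable_aux (A : Matrix (Fin n) (Fin n) ℍ[ℝ]) (q : ℍ[ℝ])
    (hA : ‖A‖ < ‖q‖) : Summable (fun k : ℕ => (q⁻¹ ^ (k + 1)) • A ^ k) := by
  have hq0 : (0:ℝ) < ‖q‖ := lt_of_le_of_lt (norm_nonneg A) hA
  have ht0 : (0:ℝ) ≤ ‖A‖ * ‖q‖⁻¹ := by positivity
  have ht1 : ‖A‖ * ‖q‖⁻¹ < 1 := by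
    rw [← div_eq_mul_inv]
    exact (div_lt_one hq0).mpr hA
  apply Summable.of_norm_bounded
    (g := fun k : ℕ => (‖q‖⁻¹ * ‖(1 : Matrix (Fin n) (Fin n) ℍ[ℝ])‖) * (‖A‖ * ‖q‖⁻¹) ^ k)
    ((summable_geometric_of_lt_one ht0 ht1).mul_left _)
  intro k
  calc ‖(q⁻¹ ^ (k + 1)) • A ^ k‖ = ‖((q⁻¹ ^ (k+1)) * 1) • A ^ k‖ := by rw [mul_one]
    _ ≤ (‖(1:ℍ[ℝ])‖ * ‖(1 : Matrix (Fin n) (Fin n) ℍ[ℝ])‖ * ‖A‖ ^ k) * (‖q‖⁻¹) ^ (k+1) :=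
        summand_norm_le A q 1 (k+1) k
    _ = (‖q‖⁻¹ * ‖(1 : Matrix (Fin n) (Fin n) ℍ[ℝ])‖) * (‖A‖ * ‖q‖⁻¹) ^ k := by
        rw [norm_one, mul_pow, pow_succ]; ring

private lemma mul_eq_of_hasSum (A : Matrix (Fin n) (Fin n) ℍ[ℝ]) (c m : ℝ) (q s : ℍ[ℝ])
    (hq : q ≠ 0) (hA : ‖A‖ < ‖q‖) (hqs : q + s = (c : ℍ[ℝ])) (hm : q * s = (m : ℍ[ℝ]))
    (S : Matrix (Fin n) (Fin n) ℍ[ℝ])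
    (hS : HasSum (fun k : ℕ => (q⁻¹ ^ (k + 1)) • A ^ k) S) :
    S * (A ^ 2 - c • A + m • (1 : Matrix (Fin n) (Fin n) ℍ[ℝ]))
      = s • (1 : Matrix (Fin n) (Fin n) ℍ[ℝ]) - A := by
  have hq0 : (0:ℝ) < ‖q‖ := lt_of_le_of_lt (norm_nonneg A) hA
  have ht0 : (0:ℝ) ≤ ‖A‖ * ‖q‖⁻¹ := by positivity
  have ht1 : ‖A‖ * ‖q‖⁻¹ < 1 := by
    rw [← div_eq_mul_inv]; exact (div_lt_one hq0).mpr hA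
  have hgeo : Tendsto (fun N : ℕ => (‖A‖ * ‖q‖⁻¹) ^ N) atTop (𝓝 0) :=
    tendsto_pow_atTop_nhds_zero_of_lt_one ht0 ht1
  have h1 : Tendsto (fun N : ℕ => (∑ k ∈ Finset.range N, (q⁻¹ ^ (k + 1)) • A ^ k) *
      (A ^ 2 - c • A + m • (1 : Matrix (Fin n) (Fin n) ℍ[ℝ]))) atTop
      (𝓝 (S * (A ^ 2 - c • A + m • (1 : Matrix (Fin n) (Fin n) ℍ[ℝ])))) :=
    hS.tendsto_sum_nat.mul_const _
  have t0a : Tendsto (fun N : ℕ => (q⁻¹ ^ N) • A ^ (N + 1)) atTop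
      (𝓝 (0 : Matrix (Fin n) (Fin n) ℍ[ℝ])) := by
    refine squeeze_zero_norm (fun N => ?_)
      (a := fun N : ℕ => (‖(1:ℍ[ℝ])‖ * ‖(1 : Matrix (Fin n) (Fin n) ℍ[ℝ])‖ * ‖A‖) *
        (‖A‖ * ‖q‖⁻¹) ^ N) ?_
    · calc ‖(q⁻¹ ^ N) • A ^ (N + 1)‖ = ‖((q⁻¹ ^ N) * 1) • A ^ (N + 1)‖ := by rw [mul_one]
        _ ≤ (‖(1:ℍ[ℝ])‖ * ‖(1 : Matrix (Fin n) (Fin n) ℍ[ℝ])‖ * ‖A‖ ^ (N + 1)) * (‖q‖⁻¹) ^ N :=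
            summand_norm_le A q 1 N (N + 1)
        _ = (‖(1:ℍ[ℝ])‖ * ‖(1 : Matrix (Fin n) (Fin n) ℍ[ℝ])‖ * ‖A‖) * (‖A‖ * ‖q‖⁻¹) ^ N := by
            rw [mul_pow, pow_succ]; ring
    · have := hgeo.const_mul (‖(1:ℍ[ℝ])‖ * ‖(1 : Matrix (Fin n) (Fin n) ℍ[ℝ])‖ * ‖A‖)
      rwa [mul_zero] at this
  have t0b : Tendsto (fun N : ℕ => ((q⁻¹ ^ N) * s) • A ^ N) atTop
      (𝓝 (0 : Matrix (Fin n) (Fin n) ℍ[ℝ])) := by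
    refine squeeze_zero_norm (fun N => ?_)
      (a := fun N : ℕ => (‖s‖ * ‖(1 : Matrix (Fin n) (Fin n) ℍ[ℝ])‖) * (‖A‖ * ‖q‖⁻¹) ^ N) ?_
    · calc ‖((q⁻¹ ^ N) * s) • A ^ N‖
          ≤ (‖s‖ * ‖(1 : Matrix (Fin n) (Fin n) ℍ[ℝ])‖ * ‖A‖ ^ N) * (‖q‖⁻¹) ^ N :=
            summand_norm_le A q s N N
        _ = (‖s‖ * ‖(1 : Matrix (Fin n) (Fin n) ℍ[ℝ])‖) * (‖A‖ * ‖q‖⁻¹) ^ N := by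
            rw [mul_pow]; ring
    · have := hgeo.const_mul (‖s‖ * ‖(1 : Matrix (Fin n) (Fin n) ℍ[ℝ])‖)
      rwa [mul_zero] at this
  have h2 : Tendsto (fun N : ℕ => (∑ k ∈ Finset.range N, (q⁻¹ ^ (k + 1)) • A ^ k) *
      (A ^ 2 - c • A + m • (1 : Matrix (Fin n) (Fin n) ℍ[ℝ]))) atTop
      (𝓝 (0 - 0 + (s • (1 : Matrix (Fin n) (Fin n) ℍ[ℝ]) - A))) := by
    apply Tendsto.congr (fun N => (telescope A c m q s hq hqs hm N).symm)
    exact (t0a.sub t0b).add tendsto_const_nhds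
  have := tendsto_nhds_unique h1 h2
  rw [this]; abel

private lemma isUnit_of_left_inv (B X : Matrix (Fin n) (Fin n) ℍ[ℝ]) (h : X * B = 1) :
    IsUnit B := by
  have hf : Function.Surjective (LinearMap.mulRight ℝ B) := fun z =>
    ⟨z * X, by simp [LinearMap.mulRight_apply, mul_assoc, h]⟩
  have hinj : Function.Injective (LinearMap.mulRight ℝ B) :=
    LinearMap.injective_iff_surjective.mpr hf
  have h2 : B * X = 1 := by
    apply hinj
    simp only [LinearMap.mulRight_apply, one_mul, mul_assoc, h, mul_one]
  exact ⟨⟨B, X, h2, h⟩, rfl⟩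

end RightSRes

open RightSRes

theorem right_S_resolvent_series (n : ℕ) (A : Matrix (Fin n) (Fin n) ℍ[ℝ]) (r : ℍ[ℝ])
    (h : ‖A‖ < ‖r‖) :
    ∑' k : ℕ, (r⁻¹ ^ (k + 1)) • A ^ k =
      -((A - (star r) • (1 : Matrix (Fin n) (Fin n) ℍ[ℝ])) *
          Ring.inverse (A ^ 2 - (2 * r.re) • A +
            (‖r‖ ^ 2) • (1 : Matrix (Fin n) (Fin n) ℍ[ℝ]))) := by
  have hr0' : (0:ℝ) < ‖r‖ := lt_of_le_of_lt (norm_nonneg A) h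
  have hr0 : r ≠ 0 := norm_pos_iff.mp hr0'
  have hqs : r + star r = ((2 * r.re : ℝ) : ℍ[ℝ]) := Quaternion.self_add_star' r
  have hnsq : (Quaternion.normSq r : ℝ) = ‖r‖ ^ 2 := by
    rw [Quaternion.normSq_eq_norm_mul_self, sq]
  have hm : r * star r = ((‖r‖ ^ 2 : ℝ) : ℍ[ℝ]) := by
    rw [Quaternion.self_mul_star, hnsq]
  have hm2 : star r * r = ((‖r‖ ^ 2 : ℝ) : ℍ[ℝ]) := by
    rw [Quaternion.star_mul_self, hnsq]
  have hqs2 : star r + r = ((2 * r.re : ℝ) : ℍ[ℝ]) := by rw [add_comm]; exact hqs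
  have hS := (summable_aux A r h).hasSum
  set S := ∑' k : ℕ, (r⁻¹ ^ (k + 1)) • A ^ k with hSdef
  set B := A ^ 2 - (2 * r.re) • A + (‖r‖ ^ 2) • (1 : Matrix (Fin n) (Fin n) ℍ[ℝ]) with hBdef
  have key1 : S * B = star r • (1 : Matrix (Fin n) (Fin n) ℍ[ℝ]) - A :=
    mul_eq_of_hasSum A _ _ r (star r) hr0 h hqs hm S hS
  have hU : IsUnit B := by
    by_cases hreal : star r = r
    · -- real case : B = (A - r.re • 1)^2 and A - r.re • 1 is a unit
      have hrre : r = ((r.re : ℝ) : ℍ[ℝ]) := Quaternion.star_eq_self.mp hreal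
      have hre0 : r.re ≠ 0 := by
        intro h0
        apply hr0
        rw [hrre, h0]; exact_mod_cast rfl
      have hsmul1 : (r.re : ℝ) • (1 : Matrix (Fin n) (Fin n) ℍ[ℝ]) = r • 1 := by
        rw [coe_smul, ← hrre]
      have hfac : B = (A - (r.re : ℝ) • (1 : Matrix (Fin n) (Fin n) ℍ[ℝ])) *
          (A - (r.re : ℝ) • (1 : Matrix (Fin n) (Fin n) ℍ[ℝ])) := by
        have hnr : ‖r‖ ^ 2 = r.re * r.re := by
          conv_lhs => rw [hrre]
          rw [Quaternion.norm_coe, Real.norm_eq_abs, sq_abs, sq]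
        have e1 : A * ((r.re : ℝ) • (1 : Matrix (Fin n) (Fin n) ℍ[ℝ])) = r.re • A := by
          rw [Matrix.mul_smul, mul_one]
        have e2 : ((r.re : ℝ) • (1 : Matrix (Fin n) (Fin n) ℍ[ℝ])) * A = r.re • A := by
          rw [Matrix.smul_mul, one_mul]
        have e3 : ((r.re : ℝ) • (1 : Matrix (Fin n) (Fin n) ℍ[ℝ])) *
            ((r.re : ℝ) • (1 : Matrix (Fin n) (Fin n) ℍ[ℝ])) =
            (r.re * r.re) • (1 : Matrix (Fin n) (Fin n) ℍ[ℝ]) := by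
          rw [Matrix.smul_mul, one_mul, smul_smul]
        rw [hBdef, sub_mul, mul_sub, mul_sub, e1, e2, e3, hnr, two_mul, add_smul, pow_two]
        abel
      rw [hfac]
      apply IsUnit.mul <;>
      · -- A - r.re • 1 unit
        have h1u : IsUnit ((1 : Matrix (Fin n) (Fin n) ℍ[ℝ]) - r⁻¹ • A) := by
          apply isUnit_one_sub_of_norm_lt_one
          calc ‖r⁻¹ • A‖ ≤ ‖r⁻¹‖ * ‖A‖ := norm_smul_le _ _
            _ = ‖A‖ / ‖r‖ := by rw [norm_inv]; ring
            _ < 1 := (div_lt_one hr0').mpr h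
        have h2u : IsUnit (r • (1 : Matrix (Fin n) (Fin n) ℍ[ℝ])) := by
          refine ⟨⟨r • 1, r⁻¹ • 1, ?_, ?_⟩, rfl⟩
          · rw [Matrix.smul_mul, one_mul, smul_smul, mul_inv_cancel₀ hr0, one_smul]
          · rw [Matrix.smul_mul, one_mul, smul_smul, inv_mul_cancel₀ hr0, one_smul]
        have hfac2 : A - (r.re : ℝ) • (1 : Matrix (Fin n) (Fin n) ℍ[ℝ]) =
            -((r • (1 : Matrix (Fin n) (Fin n) ℍ[ℝ])) *
              ((1 : Matrix (Fin n) (Fin n) ℍ[ℝ]) - r⁻¹ • A)) := by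
          rw [Matrix.mul_sub, mul_one, Matrix.smul_mul, one_mul, smul_smul,
            mul_inv_cancel₀ hr0, one_smul, hsmul1, neg_sub]
        rw [hfac2]
        exact (h2u.mul h1u).neg
    · -- non-real case
      have hs0 : star r ≠ 0 := star_ne_zero.mpr hr0
      have hA2 : ‖A‖ < ‖star r‖ := by rwa [Quaternion.norm_star]
      have hS2 := (summable_aux A (star r) hA2).hasSum
      have key2 : (∑' k : ℕ, ((star r)⁻¹ ^ (k + 1)) • A ^ k) * B =
          r • (1 : Matrix (Fin n) (Fin n) ℍ[ℝ]) - A :=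
        mul_eq_of_hasSum A _ _ (star r) r hs0 hA2 hqs2 hm2 _ hS2
      have hd : r - star r ≠ 0 := sub_ne_zero_of_ne (fun h' => hreal h'.symm)
      apply isUnit_of_left_inv B
        (X := (r - star r)⁻¹ • ((∑' k : ℕ, ((star r)⁻¹ ^ (k + 1)) • A ^ k) - S))
      rw [Matrix.smul_mul, Matrix.sub_mul, key1, key2]
      have : (r • (1 : Matrix (Fin n) (Fin n) ℍ[ℝ]) - A) - (star r • 1 - A) =
          (r - star r) • (1 : Matrix (Fin n) (Fin n) ℍ[ℝ]) := by
        rw [sub_smul]; abel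
      rw [this, smul_smul, inv_mul_cancel₀ hd, one_smul]
  calc S = S * 1 := (mul_one _).symm
    _ = S * (B * Ring.inverse B) := by rw [Ring.mul_inverse_cancel B hU]
    _ = (S * B) * Ring.inverse B := (mul_assoc _ _ _).symm
    _ = (star r • (1 : Matrix (Fin n) (Fin n) ℍ[ℝ]) - A) * Ring.inverse B := by rw [key1]
    _ = -((A - (star r) • (1 : Matrix (Fin n) (Fin n) ℍ[ℝ])) * Ring.inverse B) := by
        rw [← neg_mul, neg_sub]
end

section
/- Let A be a quaternionic matrix and r ∈ ℍ such that A² - 2Re(r)A + |r|²I is invertible. Define S_L⁻¹(r,A) = -(A² - 2Re(r)A + |r|²I)⁻¹(A - conj(r)I). Then S_L⁻¹(r,A)·r - A·S_L⁻¹(r,A) = I, where ·r denotes right scalar multiplication by r. -/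
open scoped Quaternion

theorem left_S_resolvent_equation (n : ℕ) (A : Matrix (Fin n) (Fin n) ℍ[ℝ]) (r : ℍ[ℝ])
    (h : IsUnit (A ^ 2 - (2 * r.re) • A + (‖r‖ ^ 2) • (1 : Matrix (Fin n) (Fin n) ℍ[ℝ]))) :
    (-(Ring.inverse (A ^ 2 - (2 * r.re) • A + (‖r‖ ^ 2) • 1) *
          (A - (star r) • (1 : Matrix (Fin n) (Fin n) ℍ[ℝ])))) *
        (r • (1 : Matrix (Fin n) (Fin n) ℍ[ℝ])) -
      A * (-(Ring.inverse (A ^ 2 - (2 * r.re) • A + (‖r‖ ^ 2) • 1) *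
          (A - (star r) • (1 : Matrix (Fin n) (Fin n) ℍ[ℝ])))) = 1 := by
  set P := A ^ 2 - (2 * r.re) • A + (‖r‖ ^ 2) • (1 : Matrix (Fin n) (Fin n) ℍ[ℝ]) with hP
  have hAP : Commute A P := by
    refine (((Commute.refl A).pow_right 2).sub_right ((Commute.refl A).smul_right _)).add_right
      ((Commute.one_right A).smul_right _)
  obtain ⟨u, hu⟩ := h
  have hB : Commute A (Ring.inverse P) := by
    have hAu : Commute A u.val := by rw [hu]; exact hAP
    rw [← hu, Ring.inverse_unit]
    exact hAu.units_inv_right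
  set B := Ring.inverse P with hBdef
  have hcoe : ∀ (x : ℝ) (M : Matrix (Fin n) (Fin n) ℍ[ℝ]), ((x : ℍ[ℝ]) • M) = x • M := by
    intro x M
    rw [← Quaternion.algebraMap_def, algebraMap_smul]
  have key : A * (A - (star r) • 1) - (A - (star r) • 1) * (r • (1 : Matrix (Fin n) (Fin n) ℍ[ℝ])) = P := by
    have h1 : (A - (star r) • 1) * (r • (1 : Matrix (Fin n) (Fin n) ℍ[ℝ]))
        = A * (r • 1) - (‖r‖ ^ 2) • 1 := by
      rw [sub_mul, smul_mul_assoc, one_mul, smul_smul, Quaternion.star_mul_self,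
        Quaternion.normSq_eq_norm_mul_self, hcoe, ← sq]
    have h2 : A * ((star r) • (1 : Matrix (Fin n) (Fin n) ℍ[ℝ])) + A * (r • 1)
        = (2 * r.re) • A := by
      rw [← mul_add, ← add_smul, Quaternion.star_add_self', hcoe, mul_smul_comm, mul_one]
    rw [h1, mul_sub, hP, ← h2, ← pow_two]
    abel
  calc (-(B * (A - (star r) • 1))) * (r • (1 : Matrix (Fin n) (Fin n) ℍ[ℝ]))
        - A * (-(B * (A - (star r) • 1)))
      = B * (A * (A - (star r) • 1) - (A - (star r) • 1) * (r • 1)) := by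
        have e1 : (-(B * (A - (star r) • 1))) * (r • (1 : Matrix (Fin n) (Fin n) ℍ[ℝ]))
            = -(B * ((A - (star r) • 1) * (r • 1))) := by rw [neg_mul, mul_assoc]
        have e2 : A * (-(B * (A - (star r) • 1))) = -(B * (A * (A - (star r) • 1))) := by
          rw [mul_neg, ← mul_assoc, hB.eq, mul_assoc]
        rw [e1, e2, mul_sub, neg_sub_neg, ← mul_sub]
    _ = B * P := by rw [key]
    _ = 1 := Ring.inverse_mul_cancel P ⟨u, hu⟩
end

section
/- Let A be a quaternionic matrix and s ∈ ℍ such that A² - 2Re(s)A + |s|²I is invertible. Define S_R⁻¹(s,A) = -(A - conj(s)I)(A² - 2Re(s)A + |s|²I)⁻¹. Then s·S_R⁻¹(s,A) - S_R⁻¹(s,A)·A = I, where s· denotes left scalar multiplication by s. -/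
set_option maxHeartbeats 1000000

open scoped Quaternion

theorem right_S_resolvent_equation (n : ℕ) (A : Matrix (Fin n) (Fin n) ℍ[ℝ]) (s : ℍ[ℝ])
    (h : IsUnit (A ^ 2 - (2 * s.re) • A + (‖s‖ ^ 2) • (1 : Matrix (Fin n) (Fin n) ℍ[ℝ]))) :
    s • (-((A - (star s) • (1 : Matrix (Fin n) (Fin n) ℍ[ℝ])) *
          Ring.inverse (A ^ 2 - (2 * s.re) • A + (‖s‖ ^ 2) • 1))) -
      (-((A - (star s) • (1 : Matrix (Fin n) (Fin n) ℍ[ℝ])) *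
          Ring.inverse (A ^ 2 - (2 * s.re) • A + (‖s‖ ^ 2) • 1))) * A = 1 := by
  set B : Matrix (Fin n) (Fin n) ℍ[ℝ] :=
    A ^ 2 - (2 * s.re) • A + (‖s‖ ^ 2) • 1 with hB
  set R : Matrix (Fin n) (Fin n) ℍ[ℝ] := Ring.inverse B with hR
  have hAB : A * B = B * A := by
    simp only [hB, mul_add, add_mul, mul_sub, sub_mul, mul_smul_comm, smul_mul_assoc,
      mul_one, one_mul, sq, mul_assoc]
  have h2 : B * R = 1 := Ring.mul_inverse_cancel B h
  have h3 : R * B = 1 := Ring.inverse_mul_cancel B h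
  have hc : R * A = A * R := by
    calc R * A = R * A * (B * R) := by rw [h2, mul_one]
      _ = R * (A * B) * R := by rw [← mul_assoc, mul_assoc R A B]
      _ = R * B * A * R := by rw [hAB, mul_assoc R B A]
      _ = A * R := by rw [h3, one_mul]
  set P : Matrix (Fin n) (Fin n) ℍ[ℝ] := A - (star s) • 1 with hP
  have key : P * A - s • P = B := by
    have hss : s + star s = ((2 * s.re : ℝ) : ℍ[ℝ]) := Quaternion.self_add_star' s
    have hns : s * star s = ((‖s‖ ^ 2 : ℝ) : ℍ[ℝ]) := by
      rw [Quaternion.self_mul_star, Quaternion.normSq_eq_norm_mul_self, sq]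
    have e1 : ((star s) • (1 : Matrix (Fin n) (Fin n) ℍ[ℝ])) * A = (star s) • A := by
      rw [Matrix.smul_mul, one_mul]
    have e2 : s • ((star s) • (1 : Matrix (Fin n) (Fin n) ℍ[ℝ])) = (s * star s) • 1 :=
      smul_smul s (star s) 1
    rw [hP, hB, sub_mul, e1, smul_sub, e2, hns, sq A]
    have e3 : s • A + (star s) • A = (2 * s.re) • A := by
      rw [← add_smul, hss]
      exact algebraMap_smul ℍ[ℝ] (2 * s.re) A
    have e4 : (((‖s‖ ^ 2 : ℝ) : ℍ[ℝ])) • (1 : Matrix (Fin n) (Fin n) ℍ[ℝ]) =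
        (‖s‖ ^ 2) • 1 := by
      exact algebraMap_smul ℍ[ℝ] (‖s‖ ^ 2) (1 : Matrix (Fin n) (Fin n) ℍ[ℝ])
    rw [← e3, ← e4]
    abel
  clear_value B R P
  calc s • (-(P * R)) - (-(P * R)) * A
      = -((s • P) * R) + P * (R * A) := by
        rw [smul_neg, Matrix.smul_mul, neg_mul, sub_neg_eq_add, mul_assoc]
    _ = -((s • P) * R) + (P * A) * R := by rw [hc, mul_assoc]
    _ = (P * A - s • P) * R := by rw [sub_mul, neg_add_eq_sub]
    _ = 1 := by rw [key, h2]
end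

section
/- Let A be a quaternionic n×n matrix and p ∈ ℍ with |p|·‖A‖ < 1. Then ∑_{n=0}^∞ pⁿ Aⁿ = (I - conj(p)·A)(|p|²A² - 2Re(p)A + I)⁻¹, where pⁿAⁿ means left scalar multiplication of the matrix Aⁿ entrywise by the quaternion pⁿ. -/
open scoped Quaternion

attribute [local instance] Matrix.linftyOpNormedRing
attribute [local instance] Matrix.linftyOpIsBoundedSMul

section aux

lemma srr_telescope {M : Type*} [NormedAddCommGroup M] {w : ℕ → M} {L : M}
    (hL : HasSum (fun k => w k - w (k + 1)) L)
    (hw : Filter.Tendsto w Filter.atTop (nhds 0)) : L = w 0 := by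
  have h1 := hL.tendsto_sum_nat
  have h2 : ∀ N, ∑ k ∈ Finset.range N, (w k - w (k + 1)) = w 0 - w N :=
    fun N => Finset.sum_range_sub' w N
  simp only [h2] at h1
  have h3 : Filter.Tendsto (fun N => w 0 - w N) Filter.atTop (nhds (w 0 - 0)) :=
    tendsto_const_nhds.sub hw
  simpa using tendsto_nhds_unique h1 h3

variable {n : ℕ} (A : Matrix (Fin n) (Fin n) ℍ[ℝ])

lemma srr_norm_one_le : ‖(1 : Matrix (Fin n) (Fin n) ℍ[ℝ])‖ ≤ 1 := by
  have : (1 : Matrix (Fin n) (Fin n) ℍ[ℝ]) = Matrix.diagonal (fun _ => 1) := rfl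
  rw [this, Matrix.linfty_opNorm_diagonal]
  exact (pi_norm_le_iff_of_nonneg zero_le_one).2 fun i => by simp

lemma srr_norm_pow_le (k : ℕ) : ‖A ^ k‖ ≤ ‖A‖ ^ k := by
  induction k with
  | zero => rw [pow_zero, pow_zero]; exact srr_norm_one_le
  | succ k ih =>
    calc ‖A ^ (k + 1)‖ = ‖A ^ k * A‖ := by rw [pow_succ]
    _ ≤ ‖A ^ k‖ * ‖A‖ := norm_mul_le _ _
    _ ≤ ‖A‖ ^ k * ‖A‖ := mul_le_mul_of_nonneg_right ih (norm_nonneg A)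
    _ = ‖A‖ ^ (k + 1) := by rw [pow_succ]

lemma srr_norm_smul_pow_le (q : ℍ[ℝ]) (k : ℕ) :
    ‖q ^ k • A ^ k‖ ≤ (‖q‖ * ‖A‖) ^ k := by
  calc ‖q ^ k • A ^ k‖ ≤ ‖q ^ k‖ * ‖A ^ k‖ := norm_smul_le _ _
  _ ≤ ‖q‖ ^ k * ‖A‖ ^ k := by
      rw [norm_pow]
      exact mul_le_mul_of_nonneg_left (srr_norm_pow_le A k) (by positivity)
  _ = (‖q‖ * ‖A‖) ^ k := (mul_pow _ _ _).symm

end aux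

set_option maxHeartbeats 1000000 in
theorem slice_regular_resolvent (n : ℕ) (A : Matrix (Fin n) (Fin n) ℍ[ℝ]) (p : ℍ[ℝ])
    (h : ‖p‖ * ‖A‖ < 1) :
    IsUnit ((‖p‖ ^ 2) • A ^ 2 - (2 * p.re) • A + (1 : Matrix (Fin n) (Fin n) ℍ[ℝ])) ∧
      ∑' k : ℕ, (p ^ k) • A ^ k =
        ((1 : Matrix (Fin n) (Fin n) ℍ[ℝ]) - (star p) • A) *
          Ring.inverse ((‖p‖ ^ 2) • A ^ 2 - (2 * p.re) • A + 1) := by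
  haveI : @CompleteSpace (Matrix (Fin n) (Fin n) ℍ[ℝ]) PseudoMetricSpace.toUniformSpace :=
    (inferInstance : CompleteSpace (Fin n → Fin n → ℍ[ℝ]))
  set B : Matrix (Fin n) (Fin n) ℍ[ℝ] :=
    (‖p‖ ^ 2) • A ^ 2 - (2 * p.re) • A + 1 with hBdef
  have hx0 : (0:ℝ) ≤ ‖p‖ * ‖A‖ := by positivity
  have hgeo : Summable (fun k : ℕ => (‖p‖ * ‖A‖) ^ k) :=
    summable_geometric_of_lt_one hx0 h
  have hxt : Filter.Tendsto (fun k : ℕ => (‖p‖ * ‖A‖) ^ k) Filter.atTop (nhds 0) :=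
    tendsto_pow_atTop_nhds_zero_of_lt_one hx0 h
  -- quaternion coefficient identities
  have hq1 : ((‖p‖ ^ 2 : ℝ) : ℍ[ℝ]) = star p * p := by
    rw [Quaternion.star_mul_self, Quaternion.normSq_eq_norm_mul_self, sq]
  have hq2 : ((2 * p.re : ℝ) : ℍ[ℝ]) = star p + p := (Quaternion.star_add_self' p).symm
  -- real smul as quaternion mul
  have hrs : ∀ (r : ℝ) (q : ℍ[ℝ]) (M : Matrix (Fin n) (Fin n) ℍ[ℝ]),
      q • (r • M) = ((r : ℍ[ℝ]) * q) • M := by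
    intro r q M
    rw [smul_comm, ← smul_assoc, Algebra.smul_def]
    norm_cast
  -- A^k * B expansion and commutation
  have hAB : ∀ k : ℕ, A ^ k * B =
      (‖p‖ ^ 2 : ℝ) • A ^ (k + 2) - (2 * p.re : ℝ) • A ^ (k + 1) + A ^ k := by
    intro k
    rw [hBdef, mul_add, mul_sub, mul_one, Matrix.mul_smul, Matrix.mul_smul,
      ← pow_add, ← pow_succ]
  have hBA : ∀ k : ℕ, A ^ k * B = B * A ^ k := by
    intro k
    rw [hAB, hBdef, add_mul, sub_mul, one_mul, Matrix.smul_mul, Matrix.smul_mul,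
      ← pow_add, ← pow_succ', add_comm 2 k]
  -- summability of the main series
  have hsummand : Summable (fun k : ℕ => (p ^ k) • A ^ k) :=
    Summable.of_norm_bounded hgeo (fun k => srr_norm_smul_pow_le A p k)
  set S : Matrix (Fin n) (Fin n) ℍ[ℝ] := ∑' k : ℕ, (p ^ k) • A ^ k with hSdef
  -- telescoping identity for S * B
  set v : ℕ → Matrix (Fin n) (Fin n) ℍ[ℝ] :=
    fun k => p ^ k • A ^ k - (star p * p ^ k) • A ^ (k + 1) with hvdef
  have key1 : ∀ k : ℕ, (p ^ k • A ^ k) * B = v k - v (k + 1) := by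
    intro k
    have e1 : star p * p * p ^ k = star p * p ^ (k + 1) := by
      rw [pow_succ', ← mul_assoc]
    have e2 : (star p + p) * p ^ k = star p * p ^ k + p ^ (k + 1) := by
      rw [add_mul, pow_succ']
    rw [Matrix.smul_mul, hAB, smul_add, smul_sub, hrs, hrs, hq1, hq2, hvdef]
    simp only []
    rw [e1, e2, add_smul]
    abel
  have hv0 : Filter.Tendsto v Filter.atTop (nhds 0) := by
    refine squeeze_zero_norm (a := fun k => 2 * (‖p‖ * ‖A‖) ^ k) ?_ ?_
    · intro k
      have h1 : ‖p ^ k • A ^ k‖ ≤ (‖p‖ * ‖A‖) ^ k := srr_norm_smul_pow_le A p k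
      have h2 : ‖(star p * p ^ k) • A ^ (k + 1)‖ ≤ (‖p‖ * ‖A‖) ^ k := by
        calc ‖(star p * p ^ k) • A ^ (k + 1)‖ ≤ ‖star p * p ^ k‖ * ‖A ^ (k + 1)‖ :=
              norm_smul_le _ _
        _ ≤ (‖p‖ * ‖p‖ ^ k) * (‖A‖ ^ (k + 1)) := by
            rw [norm_mul, norm_star, norm_pow]
            exact mul_le_mul_of_nonneg_left (srr_norm_pow_le A (k + 1)) (by positivity)
        _ = (‖p‖ * ‖A‖) * (‖p‖ * ‖A‖) ^ k := by ring
        _ ≤ 1 * (‖p‖ * ‖A‖) ^ k := mul_le_mul_of_nonneg_right h.le (by positivity)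
        _ = (‖p‖ * ‖A‖) ^ k := one_mul _
      calc ‖v k‖ ≤ ‖p ^ k • A ^ k‖ + ‖(star p * p ^ k) • A ^ (k + 1)‖ := norm_sub_le _ _
      _ ≤ (‖p‖ * ‖A‖) ^ k + (‖p‖ * ‖A‖) ^ k := add_le_add h1 h2
      _ = 2 * (‖p‖ * ‖A‖) ^ k := by ring
    · simpa using hxt.const_mul 2
  have hSB : S * B = 1 - (star p) • A := by
    have hs : HasSum (fun k => (p ^ k • A ^ k) * B) (S * B) :=
      hsummand.hasSum.mul_right B
    simp only [key1] at hs
    have := srr_telescope hs hv0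
    rw [this, hvdef]
    simp
  -- the left inverse C of B
  have hCsum : Summable (fun k : ℕ => (star p) ^ k • (S * A ^ k)) := by
    refine Summable.of_norm_bounded (g := fun k => ‖S‖ * (‖p‖ * ‖A‖) ^ k) (hgeo.mul_left ‖S‖) ?_
    intro k
    calc ‖(star p) ^ k • (S * A ^ k)‖ ≤ ‖(star p) ^ k‖ * ‖S * A ^ k‖ := norm_smul_le _ _
    _ ≤ ‖p‖ ^ k * (‖S‖ * ‖A‖ ^ k) := by
        rw [norm_pow, norm_star]
        refine mul_le_mul_of_nonneg_left ?_ (by positivity)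
        exact (norm_mul_le _ _).trans
          (mul_le_mul_of_nonneg_left (srr_norm_pow_le A k) (norm_nonneg S))
    _ = ‖S‖ * (‖p‖ * ‖A‖) ^ k := by rw [mul_pow]; ring
  set C : Matrix (Fin n) (Fin n) ℍ[ℝ] := ∑' k : ℕ, (star p) ^ k • (S * A ^ k) with hCdef
  set w : ℕ → Matrix (Fin n) (Fin n) ℍ[ℝ] := fun k => (star p) ^ k • A ^ k with hwdef
  have key2 : ∀ k : ℕ, ((star p) ^ k • (S * A ^ k)) * B = w k - w (k + 1) := by
    intro k
    rw [Matrix.smul_mul, mul_assoc, hBA, ← mul_assoc, hSB, sub_mul, one_mul,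
      Matrix.smul_mul, ← pow_succ', smul_sub, smul_smul, ← pow_succ]
  have hw0 : Filter.Tendsto w Filter.atTop (nhds 0) := by
    refine squeeze_zero_norm (a := fun k => (‖p‖ * ‖A‖) ^ k) ?_ hxt
    intro k
    simpa [norm_star] using srr_norm_smul_pow_le A (star p) k
  have hCB : C * B = 1 := by
    have hs : HasSum (fun k => ((star p) ^ k • (S * A ^ k)) * B) (C * B) :=
      hCsum.hasSum.mul_right B
    simp only [key2] at hs
    have := srr_telescope hs hw0
    rw [this, hwdef]
    simp
  -- from left inverse to two-sided inverse via finite dimensionality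
  haveI : Module.Finite ℝ (Matrix (Fin n) (Fin n) ℍ[ℝ]) :=
    (by infer_instance : Module.Finite ℝ (Fin n → Fin n → ℍ[ℝ]))
  have hsurj : Function.Surjective (LinearMap.mulRight ℝ B) := fun x =>
    ⟨x * C, by simp [LinearMap.mulRight_apply, mul_assoc, hCB]⟩
  have hinj : Function.Injective (LinearMap.mulRight ℝ B) :=
    (LinearMap.injective_iff_surjective).2 hsurj
  have hBC : B * C = 1 := by
    apply hinj
    simp [LinearMap.mulRight_apply, mul_assoc, hCB]
  have hU : IsUnit B := ⟨⟨B, C, hBC, hCB⟩, rfl⟩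
  refine ⟨hU, ?_⟩
  rw [← hSB, mul_assoc, Ring.mul_inverse_cancel _ hU, mul_one]
end

section
/- Schwarz lemma for quaternionic Schur multipliers: let s : 𝔹 → ℍ be given by a power series s(p) = ∑_{n≥0} pⁿ sₙ on the unit ball 𝔹 of ℍ, and suppose the kernel k_s(p,q) = ∑_{n=0}^∞ pⁿ (1 - s(p)·conj(s(q))) conj(q)ⁿ is positive definite on 𝔹 and s(0) = 0. Write s(p) = p·s⁽¹⁾(p) with s⁽¹⁾(p) = ∑_{n≥0} pⁿ s_{n+1}. Then the kernel k_{s⁽¹⁾}(p,q) = ∑_{n=0}^∞ pⁿ (1 - s⁽¹⁾(p)·conj(s⁽¹⁾(q))) conj(q)ⁿ is also positive definite on 𝔹. -/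
open scoped Quaternion

/-- A quaternion-valued kernel on the open unit ball `𝔹` of `ℍ` is positive definite if it is
Hermitian and all the associated quadratic forms are nonnegative. -/
def IsPosDefKernel (k : ℍ[ℝ] → ℍ[ℝ] → ℍ[ℝ]) : Prop :=
  (∀ p q : ℍ[ℝ], ‖p‖ < 1 → ‖q‖ < 1 → star (k p q) = k q p) ∧
    ∀ (N : ℕ) (p : Fin N → ℍ[ℝ]) (c : Fin N → ℍ[ℝ]), (∀ i, ‖p i‖ < 1) →
      0 ≤ (∑ l, ∑ j, star (c l) * k (p l) (p j) * c j).re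

namespace SchwarzAux

open Filter Topology

noncomputable def Sf (s : ℕ → ℍ[ℝ]) (p : ℍ[ℝ]) : ℍ[ℝ] := ∑' m : ℕ, p ^ m * s m

noncomputable def Tf (s : ℕ → ℍ[ℝ]) (p : ℍ[ℝ]) : ℍ[ℝ] := ∑' m : ℕ, p ^ m * s (m + 1)

noncomputable def K (s : ℕ → ℍ[ℝ]) (p q : ℍ[ℝ]) : ℍ[ℝ] :=
  ∑' n : ℕ, p ^ n * (1 - Sf s p * star (Sf s q)) * (star q) ^ n

noncomputable def K1 (s : ℕ → ℍ[ℝ]) (p q : ℍ[ℝ]) : ℍ[ℝ] :=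
  ∑' n : ℕ, p ^ n * (1 - Tf s p * star (Tf s q)) * (star q) ^ n

variable {s : ℕ → ℍ[ℝ]}

lemma summable_aux (c : ℍ[ℝ]) {p q : ℍ[ℝ]} (hp : ‖p‖ < 1) (hq : ‖q‖ < 1) :
    Summable (fun n : ℕ => p ^ n * c * (star q) ^ n) := by
  refine Summable.of_norm ?_
  have key : ∀ n : ℕ, ‖p ^ n * c * (star q) ^ n‖ = ‖c‖ * (‖p‖ * ‖q‖) ^ n := by
    intro n
    rw [norm_mul, norm_mul, norm_pow, norm_pow, norm_star, mul_pow]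
    ring
  simp only [key]
  apply Summable.mul_left
  refine summable_geometric_of_lt_one (by positivity) ?_
  calc ‖p‖ * ‖q‖ ≤ ‖p‖ * 1 := by
        exact mul_le_mul_of_nonneg_left hq.le (norm_nonneg p)
    _ < 1 := by rwa [mul_one]

lemma summable_norm_T (hconv : ∀ p : ℍ[ℝ], ‖p‖ < 1 → Summable (fun n : ℕ => ‖p ^ n * s n‖))
    {r : ℝ} (hr0 : 0 ≤ r) (hr : r < 1) :
    Summable (fun m : ℕ => r ^ m * ‖s (m + 1)‖) := by
  set r' : ℝ := (1 + r) / 2 with hr'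
  have h1 : r < r' := by rw [hr']; linarith
  have h2 : 0 < r' := by rw [hr']; linarith
  have h3 : r' < 1 := by rw [hr']; linarith
  have h := hconv ((r' : ℝ) : ℍ[ℝ])
    (by rw [Quaternion.norm_coe, Real.norm_eq_abs, abs_of_pos h2]; exact h3)
  have h' : Summable (fun n : ℕ => r' ^ n * ‖s n‖) := by
    refine h.congr fun n => ?_
    rw [norm_mul, norm_pow, Quaternion.norm_coe, Real.norm_eq_abs, abs_of_pos h2]
  have h'' : Summable (fun n : ℕ => r' ^ (n + 1) * ‖s (n + 1)‖) := (summable_nat_add_iff 1).2 h'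
  refine Summable.of_nonneg_of_le (fun n => by positivity) (fun n => ?_) (h''.mul_left (1 / r'))
  have hx : (1 / r') * (r' ^ (n + 1) * ‖s (n + 1)‖) = r' ^ n * ‖s (n + 1)‖ := by
    rw [pow_succ]
    field_simp
  rw [hx]
  have : r ^ n ≤ r' ^ n := pow_le_pow_left₀ hr0 h1.le n
  exact mul_le_mul_of_nonneg_right this (norm_nonneg _)

lemma summable_T (hconv : ∀ p : ℍ[ℝ], ‖p‖ < 1 → Summable (fun n : ℕ => ‖p ^ n * s n‖))
    {p : ℍ[ℝ]} (hp : ‖p‖ < 1) : Summable (fun m : ℕ => p ^ m * s (m + 1)) := by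
  refine Summable.of_norm ((summable_norm_T hconv (norm_nonneg p) hp).congr fun n => ?_)
  rw [norm_mul, norm_pow]

lemma summable_S (hconv : ∀ p : ℍ[ℝ], ‖p‖ < 1 → Summable (fun n : ℕ => ‖p ^ n * s n‖))
    {p : ℍ[ℝ]} (hp : ‖p‖ < 1) : Summable (fun m : ℕ => p ^ m * s m) := (hconv p hp).of_norm

lemma norm_Tf_le (hconv : ∀ p : ℍ[ℝ], ‖p‖ < 1 → Summable (fun n : ℕ => ‖p ^ n * s n‖))
    {p : ℍ[ℝ]} {r : ℝ} (hp : ‖p‖ ≤ r) (hr : r < 1) :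
    ‖Tf s p‖ ≤ ∑' m : ℕ, r ^ m * ‖s (m + 1)‖ := by
  have hr0 : 0 ≤ r := (norm_nonneg p).trans hp
  have hp1 : ‖p‖ < 1 := lt_of_le_of_lt hp hr
  have hsum : Summable (fun m : ℕ => ‖p ^ m * s (m + 1)‖) :=
    (summable_norm_T hconv (norm_nonneg p) hp1).congr fun n => by rw [norm_mul, norm_pow]
  refine (norm_tsum_le_tsum_norm hsum).trans
    (Summable.tsum_le_tsum (fun n => ?_) hsum (summable_norm_T hconv hr0 hr))
  rw [norm_mul, norm_pow]
  exact mul_le_mul_of_nonneg_right (pow_le_pow_left₀ (norm_nonneg p) hp n) (norm_nonneg _)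

lemma Sf_zero (hs0 : s 0 = 0) : Sf s 0 = 0 := by
  rw [Sf, tsum_eq_single 0 (fun m hm => by rw [zero_pow hm, zero_mul])]
  simp [hs0]

lemma Tf_zero : Tf s 0 = s 1 := by
  rw [Tf, tsum_eq_single 0 (fun m hm => by rw [zero_pow hm, zero_mul])]
  simp

lemma Sf_eq_mul (hconv : ∀ p : ℍ[ℝ], ‖p‖ < 1 → Summable (fun n : ℕ => ‖p ^ n * s n‖))
    (hs0 : s 0 = 0) {p : ℍ[ℝ]} (hp : ‖p‖ < 1) : Sf s p = p * Tf s p := by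
  rw [Sf, Summable.tsum_eq_zero_add (summable_S hconv hp), pow_zero, one_mul, hs0, zero_add,
    Tf, ← tsum_mul_left]
  exact tsum_congr fun n => by rw [pow_succ', mul_assoc]

lemma K_eq (hconv : ∀ p : ℍ[ℝ], ‖p‖ < 1 → Summable (fun n : ℕ => ‖p ^ n * s n‖))
    (hs0 : s 0 = 0) {p q : ℍ[ℝ]} (hp : ‖p‖ < 1) (hq : ‖q‖ < 1) :
    K s p q = 1 + p * K1 s p q * star q := by
  have hu : Summable (fun n : ℕ => p ^ n * (1 : ℍ[ℝ]) * (star q) ^ n) := summable_aux 1 hp hq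
  have hv : Summable (fun n : ℕ => p ^ n * (Sf s p * star (Sf s q)) * (star q) ^ n) :=
    summable_aux _ hp hq
  have hu' : Summable (fun n : ℕ => p ^ (n + 1) * (1 : ℍ[ℝ]) * (star q) ^ (n + 1)) :=
    (summable_nat_add_iff (f := fun n : ℕ => p ^ n * (1 : ℍ[ℝ]) * (star q) ^ n) 1).2 hu
  have key : Sf s p * star (Sf s q) = p * (Tf s p * star (Tf s q)) * star q := by
    rw [Sf_eq_mul hconv hs0 hp, Sf_eq_mul hconv hs0 hq, star_mul]
    simp only [mul_assoc]
  have c1 : ∀ n' : ℕ, p * p ^ n' = p ^ n' * p := fun n' => ((Commute.refl p).pow_right n').eq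
  have hterm1 : ∀ n : ℕ, p ^ n * (1 - Sf s p * star (Sf s q)) * (star q) ^ n
      = p ^ n * 1 * (star q) ^ n - p ^ n * (Sf s p * star (Sf s q)) * (star q) ^ n := by
    intro n; rw [mul_sub, sub_mul]
  have hterm2 : ∀ n : ℕ, p * (p ^ n * (1 - Tf s p * star (Tf s q)) * (star q) ^ n) * star q
      = p ^ (n + 1) * 1 * (star q) ^ (n + 1)
        - p ^ n * (Sf s p * star (Sf s q)) * (star q) ^ n := by
    intro n
    rw [key, mul_sub, sub_mul, mul_sub, sub_mul]
    congr 1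
    · rw [pow_succ', pow_succ]
      simp only [mul_assoc]
    · have c2 : (star q) ^ n * star q = star q * (star q) ^ n :=
        ((Commute.refl (star q)).pow_left n).eq
      simp only [mul_assoc]
      rw [← mul_assoc p (p ^ n), c1 n, mul_assoc]
      congr 2
      simp only [← mul_assoc]
      rw [mul_assoc _ ((star q) ^ n) (star q), c2, ← mul_assoc]
  have hKs : K s p q = (∑' n : ℕ, p ^ n * 1 * (star q) ^ n)
      - ∑' n : ℕ, p ^ n * (Sf s p * star (Sf s q)) * (star q) ^ n := by
    rw [K, tsum_congr hterm1, Summable.tsum_sub hu hv]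
  have hRHS : p * K1 s p q * star q = (∑' n : ℕ, p ^ (n + 1) * 1 * (star q) ^ (n + 1))
      - ∑' n : ℕ, p ^ n * (Sf s p * star (Sf s q)) * (star q) ^ n := by
    rw [K1, ← tsum_mul_left, ← tsum_mul_right, tsum_congr hterm2, Summable.tsum_sub hu' hv]
  rw [hKs, hRHS, Summable.tsum_eq_zero_add hu]
  simp only [pow_zero, one_mul, mul_one]
  abel

lemma K_zero_left (hs0 : s 0 = 0) (q : ℍ[ℝ]) : K s 0 q = 1 := by
  rw [K, Sf_zero hs0,
    tsum_eq_single 0 (fun n hn => by rw [zero_pow hn, zero_mul, zero_mul])]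
  simp

lemma K_zero_right (hs0 : s 0 = 0) (p : ℍ[ℝ]) : K s p 0 = 1 := by
  rw [K, Sf_zero hs0,
    tsum_eq_single 0 (fun n hn => by simp [zero_pow hn])]
  simp

lemma K1_herm (p q : ℍ[ℝ]) : star (K1 s p q) = K1 s q p := by
  rw [K1, K1, tsum_star]
  refine tsum_congr fun n => ?_
  simp only [star_mul, star_pow, star_star, star_sub, star_one, mul_assoc]

lemma posdef_sub_one (hpos : IsPosDefKernel (K s)) (hs0 : s 0 = 0)
    (N : ℕ) (p b : Fin N → ℍ[ℝ]) (hp : ∀ i, ‖p i‖ < 1) :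
    0 ≤ (∑ l, ∑ j, star (b l) * (K s (p l) (p j) - 1) * b j).re := by
  have hpts : ∀ i, ‖(Fin.cons 0 p : Fin (N + 1) → ℍ[ℝ]) i‖ < 1 := by
    intro i
    refine Fin.cases ?_ ?_ i
    · simp
    · intro j; simpa using hp j
  set B := ∑ i, b i with hB
  have h := hpos.2 (N + 1) (Fin.cons 0 p) (Fin.cons (-B) b) hpts
  have sum_star : ∑ i, star (b i) = star B := by rw [hB, star_sum]
  have hQ2 : ∑ l, ∑ j, star (b l) * b j = star B * B := by
    calc ∑ l, ∑ j, star (b l) * b j = ∑ l, star (b l) * ∑ j, b j := by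
          simp [Finset.mul_sum]
      _ = (∑ l, star (b l)) * ∑ j, b j := by rw [Finset.sum_mul]
      _ = star B * B := by rw [sum_star]
  have expand : (∑ l : Fin (N + 1), ∑ j : Fin (N + 1),
      star ((Fin.cons (-B) b : Fin (N+1) → ℍ[ℝ]) l) * K s ((Fin.cons (0:ℍ[ℝ]) p : Fin (N+1) → ℍ[ℝ]) l) ((Fin.cons (0:ℍ[ℝ]) p : Fin (N+1) → ℍ[ℝ]) j) * (Fin.cons (-B) b : Fin (N+1) → ℍ[ℝ]) j)
      = (∑ l, ∑ j, star (b l) * K s (p l) (p j) * b j) - star B * B := by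
    simp only [Fin.sum_univ_succ, Fin.cons_zero, Fin.cons_succ]
    simp only [K_zero_left hs0, K_zero_right hs0, mul_one, one_mul, mul_neg, neg_mul,
      star_neg, neg_neg]
    rw [Finset.sum_add_distrib]
    simp only [Finset.sum_neg_distrib]
    rw [← Finset.mul_sum, ← Finset.sum_mul, sum_star, ← hB]
    abel
  rw [expand] at h
  have goal_eq : (∑ l, ∑ j, star (b l) * (K s (p l) (p j) - 1) * b j)
      = (∑ l, ∑ j, star (b l) * K s (p l) (p j) * b j) - star B * B := by
    rw [← hQ2, ← Finset.sum_sub_distrib]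
    refine Finset.sum_congr rfl fun l _ => ?_
    rw [← Finset.sum_sub_distrib]
    refine Finset.sum_congr rfl fun j _ => ?_
    rw [mul_sub, sub_mul, mul_one]
  rw [goal_eq]
  exact h

lemma pos_part_ne_zero (hconv : ∀ p : ℍ[ℝ], ‖p‖ < 1 → Summable (fun n : ℕ => ‖p ^ n * s n‖))
    (hs0 : s 0 = 0) (hpos : IsPosDefKernel (K s)) (N : ℕ)
    (p c : Fin N → ℍ[ℝ]) (hp : ∀ i, ‖p i‖ < 1) (hne : ∀ i, p i ≠ 0) :
    0 ≤ (∑ l, ∑ j, star (c l) * K1 s (p l) (p j) * c j).re := by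
  have h := posdef_sub_one hpos hs0 N p (fun i => (star (p i))⁻¹ * c i) hp
  have key : ∀ l j, star ((star (p l))⁻¹ * c l) * (K s (p l) (p j) - 1) * ((star (p j))⁻¹ * c j)
      = star (c l) * K1 s (p l) (p j) * c j := by
    intro l j
    have hK : K s (p l) (p j) - 1 = p l * K1 s (p l) (p j) * star (p j) := by
      rw [K_eq hconv hs0 (hp l) (hp j), add_sub_cancel_left]
    rw [hK, star_mul, star_inv₀, star_star]
    simp only [mul_assoc]
    rw [inv_mul_cancel_left₀ (hne l), mul_inv_cancel_left₀ (star_ne_zero.2 (hne j))]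
  simp only [key] at h
  exact h

lemma tendsto_Tf (hconv : ∀ p : ℍ[ℝ], ‖p‖ < 1 → Summable (fun n : ℕ => ‖p ^ n * s n‖))
    {α : Type} {F : Filter α} {A : α → ℍ[ℝ]} {a : ℍ[ℝ]} {r : ℝ}
    (hr0 : 0 ≤ r) (hr : r < 1) (ha : Tendsto A F (𝓝 a)) (hA : ∀ᶠ x in F, ‖A x‖ ≤ r) :
    Tendsto (fun x => Tf s (A x)) F (𝓝 (Tf s a)) := by
  have := tendsto_tsum_of_dominated_convergence
    (f := fun x (m : ℕ) => (A x) ^ m * s (m + 1)) (g := fun m => a ^ m * s (m + 1))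
    (bound := fun m => r ^ m * ‖s (m + 1)‖) (summable_norm_T hconv hr0 hr)
    (fun m => (ha.pow m).mul_const _)
    (hA.mono fun x hx m => by
      rw [norm_mul, norm_pow]
      exact mul_le_mul_of_nonneg_right (pow_le_pow_left₀ (norm_nonneg _) hx m) (norm_nonneg _))
  exact this

lemma tendsto_K1 (hconv : ∀ p : ℍ[ℝ], ‖p‖ < 1 → Summable (fun n : ℕ => ‖p ^ n * s n‖))
    {α : Type} {F : Filter α} {A B : α → ℍ[ℝ]} {a b : ℍ[ℝ]} {r : ℝ}
    (hr0 : 0 ≤ r) (hr : r < 1) (hA : Tendsto A F (𝓝 a)) (hB : Tendsto B F (𝓝 b))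
    (hAr : ∀ᶠ x in F, ‖A x‖ ≤ r) (hBr : ∀ᶠ x in F, ‖B x‖ ≤ r) :
    Tendsto (fun x => K1 s (A x) (B x)) F (𝓝 (K1 s a b)) := by
  set C := ∑' m : ℕ, r ^ m * ‖s (m + 1)‖ with hC
  have hC0 : 0 ≤ C := tsum_nonneg fun m => by positivity
  have main := tendsto_tsum_of_dominated_convergence
    (f := fun x (n : ℕ) => (A x) ^ n * (1 - Tf s (A x) * star (Tf s (B x))) * (star (B x)) ^ n)
    (g := fun n => a ^ n * (1 - Tf s a * star (Tf s b)) * (star b) ^ n)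
    (bound := fun n => (1 + C * C) * (r * r) ^ n)
    ((summable_geometric_of_lt_one (by positivity) (by nlinarith)).mul_left _)
    (fun n => ((hA.pow n).mul
      (tendsto_const_nhds.sub ((tendsto_Tf hconv hr0 hr hA hAr).mul
        ((tendsto_Tf hconv hr0 hr hB hBr).star)))).mul ((hB.star).pow n))
    ?_
  · exact main
  · filter_upwards [hAr, hBr] with x hxA hxB
    intro n
    have h1 : ‖1 - Tf s (A x) * star (Tf s (B x))‖ ≤ 1 + C * C := by
      refine (norm_sub_le _ _).trans ?_
      rw [norm_one, norm_mul, norm_star]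
      have e1 := norm_Tf_le hconv hxA hr
      have e2 := norm_Tf_le hconv hxB hr
      have : ‖Tf s (A x)‖ * ‖Tf s (B x)‖ ≤ C * C :=
        mul_le_mul e1 e2 (norm_nonneg _) hC0
      linarith
    calc ‖(A x) ^ n * (1 - Tf s (A x) * star (Tf s (B x))) * (star (B x)) ^ n‖
        = ‖A x‖ ^ n * ‖1 - Tf s (A x) * star (Tf s (B x))‖ * ‖B x‖ ^ n := by
          rw [norm_mul, norm_mul, norm_pow, norm_pow, norm_star]
      _ ≤ r ^ n * (1 + C * C) * r ^ n := by
          have p1 : ‖A x‖ ^ n ≤ r ^ n := pow_le_pow_left₀ (norm_nonneg _) hxA n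
          have p2 : ‖B x‖ ^ n ≤ r ^ n := pow_le_pow_left₀ (norm_nonneg _) hxB n
          have hn1 : (0:ℝ) ≤ ‖1 - Tf s (A x) * star (Tf s (B x))‖ := norm_nonneg _
          have hrn : (0:ℝ) ≤ r ^ n := by positivity
          calc ‖A x‖ ^ n * ‖1 - Tf s (A x) * star (Tf s (B x))‖ * ‖B x‖ ^ n
              ≤ r ^ n * (1 + C * C) * ‖B x‖ ^ n := by
                refine mul_le_mul_of_nonneg_right ?_ (by positivity)
                exact mul_le_mul p1 h1 hn1 hrn
            _ ≤ r ^ n * (1 + C * C) * r ^ n :=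
                mul_le_mul_of_nonneg_left p2 (by positivity)
      _ = (1 + C * C) * (r * r) ^ n := by rw [mul_pow]; ring

lemma K1_pos (hconv : ∀ p : ℍ[ℝ], ‖p‖ < 1 → Summable (fun n : ℕ => ‖p ^ n * s n‖))
    (hs0 : s 0 = 0) (hpos : IsPosDefKernel (K s)) (N : ℕ)
    (p c : Fin N → ℍ[ℝ]) (hp : ∀ i, ‖p i‖ < 1) :
    0 ≤ (∑ l, ∑ j, star (c l) * K1 s (p l) (p j) * c j).re := by
  classical
  set F : Filter ℝ := nhdsWithin 0 (Set.Ioi 0) with hF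
  set pe : ℝ → Fin N → ℍ[ℝ] := fun ε i => if p i = 0 then ((ε : ℝ) : ℍ[ℝ]) else p i with hpe
  set r : Fin N → ℝ := fun i => max ‖p i‖ (1 / 2) with hr
  have hri : ∀ i, r i < 1 := fun i => max_lt (hp i) (by norm_num)
  have hri0 : ∀ i, 0 ≤ r i := fun i => le_trans (norm_nonneg _) (le_max_left _ _)
  have hmem : Set.Ioo (0 : ℝ) (1 / 2) ∈ F := by
    rw [hF]
    exact Ioo_mem_nhdsGT_of_mem ⟨le_refl _, by norm_num⟩
  have hbound : ∀ i, ∀ᶠ ε in F, ‖pe ε i‖ ≤ r i := by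
    intro i
    filter_upwards [hmem] with ε hε
    by_cases h : p i = 0
    · simp only [hpe, if_pos h, Quaternion.norm_coe, Real.norm_eq_abs, abs_of_pos hε.1]
      exact le_trans hε.2.le (le_max_right _ _)
    · simp only [hpe, if_neg h]
      exact le_max_left _ _
  have htend : ∀ i, Tendsto (fun ε => pe ε i) F (𝓝 (p i)) := by
    intro i
    by_cases h : p i = 0
    · simp only [hpe, if_pos h, h]
      have h0 : Tendsto (fun ε : ℝ => ε) F (𝓝 0) := tendsto_id.mono_left nhdsWithin_le_nhds
      have := (Quaternion.continuous_coe.tendsto 0).comp h0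
      simpa [Function.comp_def] using this
    · simp only [hpe, if_neg h]
      exact tendsto_const_nhds
  have hev : ∀ᶠ ε in F, 0 ≤ (∑ l, ∑ j, star (c l) * K1 s (pe ε l) (pe ε j) * c j).re := by
    filter_upwards [hmem] with ε hε
    refine pos_part_ne_zero hconv hs0 hpos N (pe ε) c ?_ ?_
    · intro i
      by_cases h : p i = 0
      · simp only [hpe, if_pos h, Quaternion.norm_coe, Real.norm_eq_abs, abs_of_pos hε.1]
        linarith [hε.2]
      · simp only [hpe, if_neg h]; exact hp i
    · intro i
      by_cases h : p i = 0
      · simp only [hpe, if_pos h]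
        have : ‖((ε : ℝ) : ℍ[ℝ])‖ ≠ 0 := by
          rw [Quaternion.norm_coe, Real.norm_eq_abs, abs_of_pos hε.1]
          exact ne_of_gt hε.1
        exact norm_ne_zero_iff.mp this
      · simp only [hpe, if_neg h]; exact h
  have hlim : Tendsto (fun ε => (∑ l, ∑ j, star (c l) * K1 s (pe ε l) (pe ε j) * c j).re) F
      (𝓝 ((∑ l, ∑ j, star (c l) * K1 s (p l) (p j) * c j).re)) := by
    apply (Quaternion.continuous_re.tendsto _).comp
    apply tendsto_finset_sum
    intro l _
    apply tendsto_finset_sum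
    intro j _
    have hrr0 : 0 ≤ max (r l) (r j) := le_trans (hri0 l) (le_max_left _ _)
    have hrr1 : max (r l) (r j) < 1 := max_lt (hri l) (hri j)
    refine (tendsto_const_nhds.mul (tendsto_K1 hconv hrr0 hrr1 (htend l) (htend j)
      ((hbound l).mono fun x hx => hx.trans (le_max_left _ _))
      ((hbound j).mono fun x hx => hx.trans (le_max_right _ _)))).mul_const _
  exact ge_of_tendsto hlim hev

end SchwarzAux

set_option maxHeartbeats 1000000 in
theorem schwarz_lemma_schur_multiplier (s : ℕ → ℍ[ℝ])
    (hconv : ∀ p : ℍ[ℝ], ‖p‖ < 1 → Summable (fun n : ℕ => ‖p ^ n * s n‖))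
    (hs0 : s 0 = 0)
    (hpos : IsPosDefKernel (fun p q =>
      ∑' n : ℕ, p ^ n * (1 - (∑' m : ℕ, p ^ m * s m) * star (∑' m : ℕ, q ^ m * s m)) *
        (star q) ^ n)) :
    IsPosDefKernel (fun p q =>
      ∑' n : ℕ, p ^ n *
        (1 - (∑' m : ℕ, p ^ m * s (m + 1)) * star (∑' m : ℕ, q ^ m * s (m + 1))) *
        (star q) ^ n) := by
  have hKfun : SchwarzAux.K s = (fun p q =>
      ∑' n : ℕ, p ^ n * (1 - (∑' m : ℕ, p ^ m * s m) * star (∑' m : ℕ, q ^ m * s m)) *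
        (star q) ^ n) := by
    funext p q
    simp only [SchwarzAux.K, SchwarzAux.Sf]
  have hK1fun : SchwarzAux.K1 s = (fun p q =>
      ∑' n : ℕ, p ^ n *
        (1 - (∑' m : ℕ, p ^ m * s (m + 1)) * star (∑' m : ℕ, q ^ m * s (m + 1))) *
        (star q) ^ n) := by
    funext p q
    simp only [SchwarzAux.K1, SchwarzAux.Tf]
  rw [← hKfun] at hpos
  rw [← hK1fun]
  constructor
  · intro p q _ _
    exact SchwarzAux.K1_herm (s := s) p q
  · intro N p c hp
    exact SchwarzAux.K1_pos hconv hs0 hpos N p c hp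
end
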